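/- arXiv:2303.01984 — 6 statements merged into one kernel-verified Lean document; each statement's English description precedes it below -/
import Mathlib

section
/- Let K be a field of characteristic p > 0 and let L = K(x₁) be an Artin-Schreier extension with x₁^p − x₁ = κ₁ ∈ K, and let σ be a generator of Gal(L/K) with σ(x₁) = x₁ + 1. Then the element S(x₁,1) = (x₁^p + 1 − (x₁+1)^p)/p ∈ L satisfies Tr_{L/K}(S(x₁,1)) = 1. -/
open Finset in
lemma zmod_sum_pow_top (p : ℕ) [Fact p.Prime] :
    ∑ x : ZMod p, x ^ (p - 1) = -1 := by
  have hp := (Fact.out : p.Prime)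
  have h0 : (0 : ZMod p) ^ (p - 1) = 0 := zero_pow (by have := hp.two_le; omega)
  calc ∑ x : ZMod p, x ^ (p - 1)
      = ∑ x ∈ (univ : Finset (ZMod p)).erase 0, x ^ (p - 1) :=
        (Finset.sum_erase _ (f := fun x : ZMod p => x ^ (p - 1)) h0).symm
    _ = ∑ _x ∈ (univ : Finset (ZMod p)).erase 0, (1 : ZMod p) :=
        Finset.sum_congr rfl fun x hx =>
          ZMod.pow_card_sub_one_eq_one (Finset.ne_of_mem_erase hx)
    _ = ((p - 1 : ℕ) : ZMod p) := by
        rw [Finset.sum_const, Finset.card_erase_of_mem (mem_univ _), card_univ, ZMod.card,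
          nsmul_eq_mul, mul_one]
    _ = -1 := by
        rw [Nat.cast_sub hp.one_le]
        simp [CharP.cast_eq_zero]

lemma zmod_sum_pow_lt (p : ℕ) [Fact p.Prime] (j : ℕ) (hj : j < p - 1) :
    ∑ x : ZMod p, x ^ j = 0 :=
  FiniteField.sum_pow_lt_card_sub_one (K := ZMod p) j (by rwa [ZMod.card])

lemma sum_fin_cast_zmod (p : ℕ) [Fact p.Prime] {M : Type*} [AddCommMonoid M]
    (f : ZMod p → M) : ∑ x : ZMod p, f x = ∑ k ∈ Finset.range p, f (k : ZMod p) := by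
  have hp := (Fact.out : p.Prime)
  rw [← Fin.sum_univ_eq_sum_range (fun k => f (k : ZMod p)) p]
  have hbij : Function.Bijective (fun k : Fin p => ((k : ℕ) : ZMod p)) := by
    rw [Fintype.bijective_iff_injective_and_card]
    refine ⟨fun a b hab => ?_, by simp [ZMod.card]⟩
    have := congrArg ZMod.val hab
    rwa [ZMod.val_cast_of_lt a.2, ZMod.val_cast_of_lt b.2, Fin.val_inj] at this
  exact (Fintype.sum_bijective _ hbij _ _ (fun k => rfl)).symm

-- transfer to L
lemma sum_range_pow_char (p : ℕ) [Fact p.Prime] {L : Type*} [Field L] [CharP L p]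
    (j : ℕ) (hj : j ≤ p - 1) :
    ∑ k ∈ Finset.range p, ((k : L)) ^ j = if j = p - 1 then -1 else 0 := by
  have key : ∑ x : ZMod p, x ^ j = if j = p - 1 then -1 else 0 := by
    split
    · next h => rw [h]; exact zmod_sum_pow_top p
    · next h => exact zmod_sum_pow_lt p j (lt_of_le_of_ne hj h)
  let φ : ZMod p →+* L := ZMod.castHom dvd_rfl L
  have := congrArg φ ((sum_fin_cast_zmod p (fun x : ZMod p => x ^ j)).symm.trans key)
  rw [map_sum] at this
  simp only [map_pow, map_natCast] at this
  rw [this]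
  split <;> simp


/-- The element `S(x,1) = (x^p + 1 − (x+1)^p)/p`, where the division by `p`
is carried out on the integer coefficients of the Witt polynomial. -/
noncomputable def WittS1 (p : ℕ) {L : Type*} [Field L] (x : L) : L :=
  -∑ i ∈ Finset.Ioo 0 p, ((p.choose i / p : ℕ) : L) * x ^ i

/-- If `L = K(x₁)` is an Artin–Schreier extension of degree `p` with
`x₁^p − x₁ = κ₁ ∈ K`, and `σ` generates `Gal(L/K)` with `σ x₁ = x₁ + 1`,
then `Tr_{L/K}(S(x₁,1)) = 1`. -/
theorem stmt7 (p : ℕ) (hp : p.Prime) {K L : Type*} [Field K] [Field L]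
    [Algebra K L] [CharP K p] [FiniteDimensional K L]
    (hdim : Module.finrank K L = p)
    (x₁ : L) (κ₁ : K) (hx : x₁ ^ p - x₁ = algebraMap K L κ₁)
    (hL : IntermediateField.adjoin K ({x₁} : Set L) = ⊤)
    (σ : L ≃ₐ[K] L) (hσ : σ x₁ = x₁ + 1)
    (hσgen : Subgroup.closure ({σ} : Set (L ≃ₐ[K] L)) = ⊤) :
    Algebra.trace K L (WittS1 p x₁) = 1 := by
  haveI := Fact.mk hp
  haveI : CharP L p := charP_of_injective_algebraMap (algebraMap K L).injective p
  -- σ ^ k sends x₁ to x₁ + k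
  have hpow : ∀ k : ℕ, (σ ^ k) x₁ = x₁ + k := by
    intro k
    induction k with
    | zero => simp
    | succ n ih =>
      rw [pow_succ, AlgEquiv.mul_apply, hσ, map_add, map_one, ih]
      push_cast; ring
  -- an automorphism fixing x₁ is the identity
  have hfix : ∀ τ : L ≃ₐ[K] L, τ x₁ = x₁ → τ = 1 := by
    intro τ hτ
    have hinv : τ⁻¹ x₁ = x₁ := by
      conv_lhs => rw [← hτ]
      exact τ.symm_apply_apply x₁
    have hnat : ∀ (g : L ≃ₐ[K] L), g x₁ = x₁ → ∀ n : ℕ, (g ^ n) x₁ = x₁ := by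
      intro g hg n
      induction n with
      | zero => simp
      | succ n ih => rw [pow_succ, AlgEquiv.mul_apply, hg, ih]
    have hmem : x₁ ∈ IntermediateField.fixedField (Subgroup.zpowers τ) := by
      rintro ⟨g, m, rfl⟩
      show (τ ^ m) x₁ = x₁
      rcases m with n | n
      · rw [Int.ofNat_eq_coe, zpow_natCast]; exact hnat τ hτ n
      · rw [zpow_negSucc, ← inv_pow]; exact hnat τ⁻¹ hinv (n + 1)
    have htop : (⊤ : IntermediateField K L) ≤
        IntermediateField.fixedField (Subgroup.zpowers τ) := by
      rw [← hL, IntermediateField.adjoin_le_iff]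
      simpa using hmem
    ext a
    have := htop (IntermediateField.mem_top (x := a)) ⟨τ, Subgroup.mem_zpowers τ⟩
    exact this
  -- order of σ
  have hσp : σ ^ p = 1 := by
    apply hfix
    rw [hpow, CharP.cast_eq_zero, add_zero]
  have hσne : σ ≠ 1 := by
    intro h
    have h1 : x₁ + 1 = x₁ := by rw [← hσ, h]; rfl
    simpa using h1
  have horder : orderOf σ = p := orderOf_eq_prime hσp hσne
  -- the automorphism group has cardinality p, so the extension is Galois
  have hcard : Nat.card (L ≃ₐ[K] L) = p := by
    rw [← Subgroup.card_top, ← hσgen, ← Subgroup.zpowers_eq_closure, Nat.card_zpowers, horder]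
  haveI : IsGalois K L := IsGalois.of_card_aut_eq_finrank K L
    (by rw [hcard, hdim])
  -- reduce to a computation in L
  apply (algebraMap K L).injective
  rw [trace_eq_sum_automorphisms, map_one]
  -- index the automorphisms by powers of σ
  have hbij : Function.Bijective (fun k : Fin p => σ ^ (k : ℕ)) := by
    rw [Fintype.bijective_iff_injective_and_card]
    constructor
    · intro a b hab
      have h2 : x₁ + ((a : ℕ) : L) = x₁ + ((b : ℕ) : L) := by
        rw [← hpow, ← hpow]; exact congrArg (fun τ : L ≃ₐ[K] L => τ x₁) hab
      have h3 : ((a : ℕ) : L) = ((b : ℕ) : L) := add_left_cancel h2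
      exact Fin.ext (CharP.natCast_injOn_Iio L p a.2 b.2 h3)
    · rw [Fintype.card_fin, ← Nat.card_eq_fintype_card, hcard]
  rw [← Fintype.sum_bijective _ hbij _ _ (fun k => rfl),
    Fin.sum_univ_eq_sum_range (fun k => (σ ^ k) (WittS1 p x₁))]
  -- each automorphism shifts x₁
  have hshift : ∀ k : ℕ, (σ ^ k) (WittS1 p x₁) =
      -∑ i ∈ Finset.Ioo 0 p, ((p.choose i / p : ℕ) : L) * (x₁ + (k : L)) ^ i := by
    intro k
    unfold WittS1
    rw [map_neg, map_sum]
    congr 1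
    refine Finset.sum_congr rfl fun i _ => ?_
    rw [map_mul, map_pow, map_natCast, hpow]
  simp only [hshift]
  -- the inner sums
  have hp2 : 2 ≤ p := hp.two_le
  have hinner : ∀ i ∈ Finset.Ioo 0 p,
      ∑ k ∈ Finset.range p, (x₁ + (k : L)) ^ i = if i = p - 1 then -1 else 0 := by
    intro i hi
    rw [Finset.mem_Ioo] at hi
    have hexp : ∀ k ∈ Finset.range p, (x₁ + (k : L)) ^ i =
        ∑ m ∈ Finset.range (i + 1), x₁ ^ m * ((k : L)) ^ (i - m) * (i.choose m : L) :=
      fun k _ => add_pow x₁ _ i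
    rw [Finset.sum_congr rfl hexp, Finset.sum_comm]
    have hterm : ∀ m ∈ Finset.range (i + 1),
        ∑ k ∈ Finset.range p, x₁ ^ m * ((k : L)) ^ (i - m) * (i.choose m : L) =
        x₁ ^ m * (if i - m = p - 1 then (-1 : L) else 0) * (i.choose m : L) := by
      intro m hm
      rw [← Finset.sum_mul, ← Finset.mul_sum,
        sum_range_pow_char p (i - m) (by omega)]
    rw [Finset.sum_congr rfl hterm]
    by_cases hip : i = p - 1
    · subst hip
      rw [if_pos rfl]
      rw [Finset.sum_eq_single_of_mem 0 (Finset.mem_range.mpr (by omega))]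
      · simp
      · intro m hm hm0
        rw [if_neg (by rw [Finset.mem_range] at hm; omega), mul_zero, zero_mul]
    · rw [if_neg hip]
      refine Finset.sum_eq_zero fun m hm => ?_
      rw [Finset.mem_range] at hm
      rw [if_neg (by omega), mul_zero, zero_mul]
  -- put it together
  rw [Finset.sum_neg_distrib, Finset.sum_comm]
  simp only [← Finset.mul_sum]
  rw [Finset.sum_congr rfl (fun i hi => by rw [hinner i hi])]
  rw [Finset.sum_eq_single_of_mem (p - 1) (Finset.mem_Ioo.mpr ⟨by omega, by omega⟩)
    (fun i _ hi => by rw [if_neg hi, mul_zero])]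
  have hch : p.choose (p - 1) = p := by
    have h1 : p - (p - 1) = 1 := by omega
    rw [← Nat.choose_symm (Nat.sub_le p 1), h1, Nat.choose_one_right]
  rw [if_pos rfl, hch, Nat.div_self (by omega)]
  simp
end

section
/- Let K be a field of characteristic p > 0, L = K(x₁) with x₁^p − x₁ = κ₁ ∈ K and σ(x₁) = x₁ + 1 generating Gal(L/K). Then (σ−1)S(x₁,κ₁) = ℘(S(x₁,1)), i.e., σ(S(x₁,κ₁)) − S(x₁,κ₁) = S(x₁,1)^p − S(x₁,1). -/
open Finset Polynomial


/-- The element `S(x,c) = (x^p + c^p − (x+c)^p)/p`, the division by `p`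
being carried out on the integer coefficients of the Witt polynomial. -/
noncomputable def WittS (p : ℕ) {L : Type*} [Field L] (x c : L) : L :=
  -∑ i ∈ Finset.Ioo 0 p, ((p.choose i / p : ℕ) : L) * x ^ i * c ^ (p - i)

private lemma expandAux {R : Type*} [CommRing R] {p : ℕ} (hp : 0 < p) (A B : R) :
    ∑ i ∈ Finset.Ioo 0 p, (p.choose i : R) * (A ^ i * B ^ (p - i))
      = (A + B) ^ p - A ^ p - B ^ p := by
  have h := add_pow A B p
  rw [Finset.range_eq_Ico, Finset.sum_eq_sum_Ico_succ_bot (by omega),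
      Finset.sum_Ico_succ_top (by omega), Finset.Ico_add_one_left_eq_Ioo] at h
  simp only [pow_zero, Nat.sub_zero, Nat.choose_zero_right, Nat.choose_self, Nat.cast_one,
    one_mul, mul_one, Nat.sub_self] at h
  have h2 : ∑ i ∈ Finset.Ioo 0 p, (p.choose i : R) * (A ^ i * B ^ (p - i))
      = ∑ i ∈ Finset.Ioo 0 p, A ^ i * B ^ (p - i) * (p.choose i : R) :=
    Finset.sum_congr rfl fun i _ => by ring
  rw [h2]
  linear_combination -h

private lemma keyZ (p : ℕ) (hp : p.Prime) :
    ∑ i ∈ Finset.Ioo 0 p, ((p.choose i / p : ℕ) : Polynomial ℤ) *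
        (((X + 1) ^ i - X ^ i) * ((X : Polynomial ℤ) ^ p - X) ^ (p - i))
      = ∑ i ∈ Finset.Ioo 0 p, ((p.choose i / p : ℕ) : Polynomial ℤ) *
        ((X : Polynomial ℤ) ^ (p * i) - X ^ i) := by
  have hp1 : 0 < p := hp.pos
  have hp0 : ((p : ℕ) : Polynomial ℤ) ≠ 0 := by
    exact_mod_cast Nat.cast_ne_zero.mpr hp.ne_zero
  apply mul_left_cancel₀ hp0
  rw [Finset.mul_sum, Finset.mul_sum]
  have hc : ∀ i ∈ Finset.Ioo 0 p,
      ((p : ℕ) : Polynomial ℤ) * ((p.choose i / p : ℕ) : Polynomial ℤ)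
        = (p.choose i : Polynomial ℤ) := fun i hi => by
    have hi' := Finset.mem_Ioo.mp hi
    rw [← Nat.cast_mul, Nat.mul_div_cancel' (hp.dvd_choose_self hi'.1.ne' hi'.2)]
  set c : Polynomial ℤ := X ^ p - X with hcdef
  have lhs_eq : ∑ i ∈ Finset.Ioo 0 p, ((p : ℕ) : Polynomial ℤ) *
        (((p.choose i / p : ℕ) : Polynomial ℤ) * (((X + 1) ^ i - X ^ i) * c ^ (p - i)))
      = ((X ^ p + 1) ^ p - (X + 1) ^ p - c ^ p) - ((X ^ p) ^ p - X ^ p - c ^ p) := by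
    have e1 : ∑ i ∈ Finset.Ioo 0 p, ((p : ℕ) : Polynomial ℤ) *
          (((p.choose i / p : ℕ) : Polynomial ℤ) * (((X + 1) ^ i - X ^ i) * c ^ (p - i)))
        = ∑ i ∈ Finset.Ioo 0 p, ((p.choose i : Polynomial ℤ) * ((X + 1) ^ i * c ^ (p - i))
            - (p.choose i : Polynomial ℤ) * (X ^ i * c ^ (p - i))) :=
      Finset.sum_congr rfl fun i hi => by rw [← mul_assoc, hc i hi]; ring
    rw [e1, Finset.sum_sub_distrib, expandAux hp1, expandAux hp1]
    have c1 : (X : Polynomial ℤ) + 1 + c = X ^ p + 1 := by rw [hcdef]; ring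
    have c2 : (X : Polynomial ℤ) + c = X ^ p := by rw [hcdef]; ring
    rw [c1, c2]
  have rhs_eq : ∑ i ∈ Finset.Ioo 0 p, ((p : ℕ) : Polynomial ℤ) *
        (((p.choose i / p : ℕ) : Polynomial ℤ) * ((X : Polynomial ℤ) ^ (p * i) - X ^ i))
      = ((X ^ p + 1) ^ p - (X ^ p) ^ p - 1) - ((X + 1) ^ p - X ^ p - 1) := by
    have e2 : ∑ i ∈ Finset.Ioo 0 p, ((p : ℕ) : Polynomial ℤ) *
          (((p.choose i / p : ℕ) : Polynomial ℤ) * ((X : Polynomial ℤ) ^ (p * i) - X ^ i))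
        = ∑ i ∈ Finset.Ioo 0 p, ((p.choose i : Polynomial ℤ) * ((X ^ p) ^ i * (1 : Polynomial ℤ) ^ (p - i))
            - (p.choose i : Polynomial ℤ) * (X ^ i * (1 : Polynomial ℤ) ^ (p - i))) :=
      Finset.sum_congr rfl fun i hi => by
        rw [← mul_assoc, hc i hi, ← pow_mul, one_pow]; ring
    rw [e2, Finset.sum_sub_distrib, expandAux hp1, expandAux hp1]
    ring
  rw [lhs_eq, rhs_eq]
  ring

/-- If `L = K(x₁)` with `x₁^p − x₁ = κ₁ ∈ K`, and `σ` generates `Gal(L/K)`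
with `σ x₁ = x₁ + 1`, then `(σ−1)S(x₁,κ₁) = ℘(S(x₁,1))`. -/
theorem stmt8 (p : ℕ) (hp : p.Prime) {K L : Type*} [Field K] [Field L]
    [Algebra K L] [CharP K p]
    (x₁ : L) (κ₁ : K) (hx : x₁ ^ p - x₁ = algebraMap K L κ₁)
    (hL : IntermediateField.adjoin K ({x₁} : Set L) = ⊤)
    (σ : L ≃ₐ[K] L) (hσ : σ x₁ = x₁ + 1)
    (hσgen : Subgroup.closure ({σ} : Set (L ≃ₐ[K] L)) = ⊤) :
    σ (WittS p x₁ (algebraMap K L κ₁)) - WittS p x₁ (algebraMap K L κ₁) =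
      (WittS1 p x₁) ^ p - WittS1 p x₁ := by
  haveI : Fact p.Prime := ⟨hp⟩
  haveI : CharP L p := charP_of_injective_algebraMap (algebraMap K L).injective p
  set c : L := algebraMap K L κ₁ with hcdef
  have key := congrArg (Polynomial.aeval x₁ : Polynomial ℤ →ₐ[ℤ] L) (keyZ p hp)
  simp only [map_sum, map_mul, map_sub, map_add, map_pow, map_natCast, map_one,
    Polynomial.aeval_X, Polynomial.aeval_one] at key
  rw [hx] at key
  have key' : (∑ i ∈ Finset.Ioo 0 p, ((p.choose i / p : ℕ) : L) * (x₁ + 1) ^ i * c ^ (p - i))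
        - (∑ i ∈ Finset.Ioo 0 p, ((p.choose i / p : ℕ) : L) * x₁ ^ i * c ^ (p - i))
      = (∑ i ∈ Finset.Ioo 0 p, ((p.choose i / p : ℕ) : L) * x₁ ^ (p * i))
        - (∑ i ∈ Finset.Ioo 0 p, ((p.choose i / p : ℕ) : L) * x₁ ^ i) := by
    rw [← Finset.sum_sub_distrib, ← Finset.sum_sub_distrib]
    calc ∑ i ∈ Finset.Ioo 0 p, (((p.choose i / p : ℕ) : L) * (x₁ + 1) ^ i * c ^ (p - i)
            - ((p.choose i / p : ℕ) : L) * x₁ ^ i * c ^ (p - i))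
        = ∑ i ∈ Finset.Ioo 0 p, ((p.choose i / p : ℕ) : L) *
            (((x₁ + 1) ^ i - x₁ ^ i) * c ^ (p - i)) :=
          Finset.sum_congr rfl fun i _ => by ring
      _ = ∑ i ∈ Finset.Ioo 0 p, ((p.choose i / p : ℕ) : L) * (x₁ ^ (p * i) - x₁ ^ i) := key
      _ = ∑ i ∈ Finset.Ioo 0 p, (((p.choose i / p : ℕ) : L) * x₁ ^ (p * i)
            - ((p.choose i / p : ℕ) : L) * x₁ ^ i) :=
          Finset.sum_congr rfl fun i _ => by ring
  have hσS : σ (WittS p x₁ c)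
      = -∑ i ∈ Finset.Ioo 0 p, ((p.choose i / p : ℕ) : L) * (x₁ + 1) ^ i * c ^ (p - i) := by
    rw [WittS, map_neg, map_sum]
    refine congrArg Neg.neg (Finset.sum_congr rfl fun i _ => ?_)
    rw [map_mul, map_mul, map_pow, map_pow, map_natCast, hσ, hcdef, AlgEquiv.commutes]
  have hfrob : (WittS1 p x₁) ^ p
      = -∑ i ∈ Finset.Ioo 0 p, ((p.choose i / p : ℕ) : L) * x₁ ^ (p * i) := by
    rw [WittS1, neg_pow, neg_one_pow_char L p, neg_mul, one_mul, sum_pow_char, neg_inj]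
    refine Finset.sum_congr rfl fun i _ => ?_
    rw [mul_pow, ← pow_mul, mul_comm i p]
    congr 1
    exact map_natCast (frobenius L p) _
  rw [hσS, hfrob, WittS, WittS1]
  linear_combination -key'
end

section
/- Let M/K be a Galois extension of fields of characteristic p > 0 with Galois group generated by σ̄₁, σ̄₂, and let N = M(x) with x^p − x = μ ∈ M and x ∉ M. If (σ̄ᵢ − 1)μ ∈ M^℘ for i = 1,2, then N/K is a Galois extension. -/
open Polynomial

/-- Let `M/K` be a Galois extension of fields of characteristic `p > 0` with
Galois group generated by `σ̄₁, σ̄₂`, and let `N = M(x)` with `x^p − x = μ ∈ M`,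
`x ∉ M`. If `(σ̄ᵢ − 1)μ ∈ M^℘` for `i = 1,2`, then `N/K` is Galois. -/
theorem stmt11 (p : ℕ) (hp : p.Prime) {K M N : Type*} [Field K] [Field M]
    [Field N] [Algebra K M] [Algebra M N] [Algebra K N] [IsScalarTower K M N]
    [CharP K p] [FiniteDimensional K M] [IsGalois K M]
    (σ₁ σ₂ : M ≃ₐ[K] M)
    (hgen : Subgroup.closure ({σ₁, σ₂} : Set (M ≃ₐ[K] M)) = ⊤)
    (μ : M) (x : N) (hx : x ^ p - x = algebraMap M N μ)
    (hxM : x ∉ Set.range (algebraMap M N))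
    (hN : IntermediateField.adjoin M ({x} : Set N) = ⊤)
    (h1 : ∃ m : M, σ₁ μ - μ = m ^ p - m)
    (h2 : ∃ m : M, σ₂ μ - μ = m ^ p - m) :
    IsGalois K N := by
  haveI factp : Fact p.Prime := ⟨hp⟩
  haveI charM : CharP M p := charP_of_injective_algebraMap (algebraMap K M).injective p
  haveI charN : CharP N p := charP_of_injective_algebraMap (algebraMap M N).injective p
  have hp1 : 1 < p := hp.one_lt
  set f : M[X] := X ^ p - X - C μ with hfdef
  have hfeq : f = X ^ p - (X + C μ) := by ring
  have hfdeg : f.natDegree = p := by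
    rw [hfeq, natDegree_sub_eq_left_of_natDegree_lt, natDegree_X_pow]
    rw [natDegree_X_pow]
    exact lt_of_le_of_lt ((natDegree_X_add_C μ).le) hp1
  have hfmonic : f.Monic := by
    rw [hfeq]
    apply monic_X_pow_sub
    rw [degree_X_add_C]
    exact_mod_cast hp1
  have hf0 : f ≠ 0 := hfmonic.ne_zero
  have haev : aeval x f = 0 := by
    simp only [hfdef, map_sub, map_pow, aeval_X, aeval_C]
    rw [sub_sub, ← hx]
    ring
  have hint : IsIntegral M x := ⟨f, hfmonic, by simpa [aeval_def] using haev⟩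
  -- the mapped polynomial splits into linear factors
  let ψ : ZMod p →+* N := ZMod.castHom dvd_rfl N
  have hψinj : Function.Injective ψ := ψ.injective
  have hzmod : (X ^ p - X : (ZMod p)[X]) = ∏ a : ZMod p, (X - C a) := by
    have hm : (X ^ p - X : (ZMod p)[X]).Monic := by
      apply monic_X_pow_sub
      rw [degree_X]
      exact_mod_cast hp1
    have hd : (X ^ p - X : (ZMod p)[X]).natDegree = p := by
      have := FiniteField.X_pow_card_sub_X_natDegree_eq (ZMod p) hp1
      simpa using this
    have hroots : (X ^ p - X : (ZMod p)[X]).roots = Finset.univ.val := by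
      have := FiniteField.roots_X_pow_card_sub_X (ZMod p)
      rwa [ZMod.card] at this
    have hs : Splits (X ^ p - X : (ZMod p)[X]) := by
      rw [splits_iff_card_roots, hroots, hd]
      simp [ZMod.card p]
    have := hs.eq_prod_roots_of_monic hm
    rw [this, hroots]
    rfl
  have hmapN : (X ^ p - X : N[X]) = ∏ a : ZMod p, (X - C (ψ a)) := by
    have := congrArg (Polynomial.map ψ) hzmod
    simpa [Polynomial.map_prod] using this
  have hfmap : f.map (algebraMap M N) = ∏ a : ZMod p, (X - C (x + ψ a)) := by
    have h1 : f.map (algebraMap M N) = ((X : N[X]) ^ p - X).comp (X - C x) := by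
      simp only [hfdef, Polynomial.map_sub, Polynomial.map_pow, map_X, map_C,
        sub_comp, pow_comp, X_comp]
      rw [sub_pow_char, ← C_pow]
      rw [show (X : N[X]) ^ p - C (x ^ p) - (X - C x) = X ^ p - X - C (x ^ p - x) by
        rw [C_sub]; ring, hx]
    rw [h1, hmapN, prod_comp]
    refine Finset.prod_congr rfl fun a _ => ?_
    rw [sub_comp, X_comp, C_comp, C_add]
    ring
  have hsplits : Splits (f.map (algebraMap M N)) := by
    rw [hfmap]
    exact Splits.prod fun a _ => Splits.X_sub_C _
  -- the minimal polynomial of x is f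
  have hgdvd : minpoly M x ∣ f := minpoly.dvd M x haev
  have hgm_monic : ((minpoly M x).map (algebraMap M N)).Monic :=
    (minpoly.monic hint).map _
  have hgm_splits : Splits ((minpoly M x).map (algebraMap M N)) :=
    hsplits.of_dvd ((Polynomial.map_ne_zero_iff (algebraMap M N).injective).mpr hf0) (Polynomial.map_dvd _ hgdvd)
  have hcard : ((minpoly M x).map (algebraMap M N)).roots.card
      = (minpoly M x).natDegree := by
    rw [splits_iff_card_roots.mp hgm_splits, natDegree_map]
  have hψrange : ∀ a : ZMod p, ψ a ∈ Set.range (algebraMap M N) := by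
    intro a
    have : ψ = (algebraMap M N).comp (ZMod.castHom dvd_rfl M) := RingHom.ext_zmod _ _
    rw [this]
    exact ⟨ZMod.castHom dvd_rfl M a, rfl⟩
  have hmem : ∀ r ∈ ((minpoly M x).map (algebraMap M N)).roots,
      ∃ a : ZMod p, r = x + ψ a := by
    intro r hr
    have hr' : ((minpoly M x).map (algebraMap M N)).IsRoot r := (mem_roots'.mp hr).2
    have hfr : (f.map (algebraMap M N)).IsRoot r := by
      have hdvd : (minpoly M x).map (algebraMap M N) ∣ f.map (algebraMap M N) :=
        Polynomial.map_dvd _ hgdvd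
      obtain ⟨q, hq⟩ := hdvd
      rw [IsRoot, hq, eval_mul, hr'.eq_zero, zero_mul]
    rw [hfmap, IsRoot, eval_prod, Finset.prod_eq_zero_iff] at hfr
    obtain ⟨a, _, ha⟩ := hfr
    refine ⟨a, ?_⟩
    rw [eval_sub, eval_X, eval_C, sub_eq_zero] at ha
    exact ha
  have hsum2 : ∀ (T : Multiset N), (∀ r ∈ T, ∃ a : ZMod p, r = x + ψ a) →
      ∃ s ∈ Set.range (algebraMap M N), T.sum = T.card • x + s := by
    intro T
    induction T using Multiset.induction_on with
    | empty => exact fun _ => ⟨0, ⟨0, by simp⟩, by simp⟩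
    | cons r T ih =>
      intro h
      obtain ⟨s, hs, hsum⟩ := ih fun r hr => h r (Multiset.mem_cons_of_mem hr)
      obtain ⟨a, ha⟩ := h r (Multiset.mem_cons_self _ _)
      obtain ⟨u, hu⟩ := hψrange a
      obtain ⟨v, hv⟩ := hs
      refine ⟨ψ a + s, ⟨u + v, by rw [map_add, hu, hv]⟩, ?_⟩
      rw [Multiset.sum_cons, Multiset.card_cons, ha, hsum, succ_nsmul]
      ring
  have hmin : minpoly M x = f := by
    have hdle : (minpoly M x).natDegree ≤ p := hfdeg ▸ natDegree_le_of_dvd hgdvd hf0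
    have hdpos : 0 < (minpoly M x).natDegree := minpoly.natDegree_pos hint
    have hdeq : (minpoly M x).natDegree = p := by
      by_contra hne
      have hdlt : (minpoly M x).natDegree < p := lt_of_le_of_ne hdle hne
      -- derive x ∈ range (algebraMap M N)
      obtain ⟨s, ⟨v, hv⟩, hsum⟩ :=
        hsum2 ((minpoly M x).map (algebraMap M N)).roots hmem
      have hnext : ((minpoly M x).map (algebraMap M N)).roots.sum
          = algebraMap M N (-(minpoly M x).nextCoeff) := by
        have := hgm_splits.nextCoeff_eq_neg_sum_roots_of_monic hgm_monic
        rw [nextCoeff_map (algebraMap M N).injective] at this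
        rw [map_neg, this, neg_neg]
      rw [hcard, hnext] at hsum
      have hd0 : ((minpoly M x).natDegree : M) ≠ 0 := by
        rw [Ne, CharP.cast_eq_zero_iff M p]
        exact fun hdvd => absurd (Nat.le_of_dvd hdpos hdvd) (not_le.mpr hdlt)
      apply hxM
      have hdN : (((minpoly M x).natDegree : N)) ≠ 0 := by
        rw [Ne, CharP.cast_eq_zero_iff N p]
        exact fun hdvd => absurd (Nat.le_of_dvd hdpos hdvd) (not_le.mpr hdlt)
      rw [show ((minpoly M x).natDegree • x : N)
          = ((minpoly M x).natDegree : N) * x by rw [nsmul_eq_mul]] at hsum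
      refine ⟨((minpoly M x).natDegree : M)⁻¹ * (-(minpoly M x).nextCoeff - v), ?_⟩
      rw [map_neg] at hsum
      rw [map_mul, map_sub, map_neg, hv, map_inv₀, map_natCast, hsum]
      rw [show (((minpoly M x).natDegree : N) * x + s - s) = ((minpoly M x).natDegree : N) * x by ring,
        inv_mul_cancel_left₀ hdN]
    have : Associated (minpoly M x) f := by
      apply associated_of_dvd_of_natDegree_le hgdvd hf0
      rw [hfdeg, hdeq]
    exact eq_of_monic_of_associated (minpoly.monic hint) hfmonic this
  -- N is a splitting field of f over M, hence Galois
  have hsep : f.Separable := by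
    rw [← separable_map (algebraMap M N), hfmap]
    refine separable_prod_X_sub_C_iff.mpr fun a b hab => ?_
    exact hψinj (add_left_cancel hab)
  haveI hsf : f.IsSplittingField M N := by
    refine ⟨hsplits, ?_⟩
    have hadj : Algebra.adjoin M ({x} : Set N) = ⊤ := by
      rw [← IntermediateField.adjoin_simple_toSubalgebra_of_isAlgebraic hint.isAlgebraic, hN,
        IntermediateField.top_toSubalgebra]
    rw [eq_top_iff, ← hadj]
    apply Algebra.adjoin_mono
    rw [Set.singleton_subset_iff, mem_rootSet]
    exact ⟨hf0, haev⟩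
  haveI : IsGalois M N := IsGalois.of_separable_splitting_field hsep
  haveI : FiniteDimensional M N := Polynomial.IsSplittingField.finiteDimensional N f
  haveI : FiniteDimensional K N := FiniteDimensional.trans K M N
  -- lifting automorphisms of M to N
  have lift_exists : ∀ (σ : M ≃ₐ[K] M) (m : M), σ μ - μ = m ^ p - m →
      ∃ S0 : N ≃ₐ[K] N, ∀ z : M, S0 (algebraMap M N z) = algebraMap M N (σ z) := by
    intro σ m hm
    set m' : N := algebraMap M N m with hm'
    set φ : M →+* N := (algebraMap M N).comp (σ : M →+* M) with hφ
    have hev : Polynomial.eval₂ φ (x + m') (minpoly M x) = 0 := by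
      rw [hmin]
      simp only [hfdef, eval₂_sub, eval₂_pow, eval₂_X, eval₂_C]
      have hσμ : φ μ = algebraMap M N μ + m' ^ p - m' := by
        have h : σ μ = μ + (m ^ p - m) := by rw [← hm]; ring
        rw [hφ, RingHom.comp_apply]
        rw [show ((σ : M →+* M) μ) = σ μ from rfl, h]
        rw [map_add, map_sub, map_pow, hm']
        ring
      rw [hσμ, add_pow_char, ← hx]
      ring
    let Φ₀ := AdjoinRoot.lift φ (x + m') hev
    let e : AdjoinRoot (minpoly M x) ≃ₐ[M] N :=
      (IntermediateField.adjoinRootEquivAdjoin M hint).trans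
        ((IntermediateField.equivOfEq hN).trans IntermediateField.topEquiv)
    let Φ : N →+* N := Φ₀.comp (e.symm : N →+* AdjoinRoot (minpoly M x))
    have hΦM : ∀ z : M, Φ (algebraMap M N z) = algebraMap M N (σ z) := by
      intro z
      have h1 : e.symm (algebraMap M N z) = algebraMap M (AdjoinRoot (minpoly M x)) z :=
        e.symm.commutes z
      show Φ₀ (e.symm (algebraMap M N z)) = _
      rw [h1, AdjoinRoot.algebraMap_eq]
      exact AdjoinRoot.lift_of hev
    have hΦK : ∀ c : K, Φ (algebraMap K N c) = algebraMap K N c := by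
      intro c
      rw [IsScalarTower.algebraMap_apply K M N, hΦM, σ.commutes,
        ← IsScalarTower.algebraMap_apply K M N]
    let Φ' : N →ₐ[K] N := { toRingHom := Φ, commutes' := hΦK }
    have hinj : Function.Injective Φ' := Φ.injective
    refine ⟨AlgEquiv.ofBijective Φ'
      ⟨hinj, LinearMap.surjective_of_injective (f := Φ'.toLinearMap) hinj⟩,
      fun z => hΦM z⟩
  -- conclude via the fixed field criterion
  apply IsGalois.of_fixedField_eq_bot
  rw [eq_bot_iff]
  intro y hy
  have hyfix : ∀ τ : N ≃ₐ[K] N, τ y = y := fun τ => hy ⟨τ, trivial⟩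
  rw [IntermediateField.mem_bot]
  have h1 : y ∈ IntermediateField.fixedField (⊤ : Subgroup (N ≃ₐ[M] N)) := by
    rintro ⟨τ, -⟩
    exact hyfix (τ.restrictScalars K)
  have h2 : IntermediateField.fixedField (⊤ : Subgroup (N ≃ₐ[M] N)) = ⊥ := by
    have := (IsGalois.tfae (F := M) (E := N)).out 0 1
    exact this.mp inferInstance
  rw [h2, IntermediateField.mem_bot] at h1
  obtain ⟨z, hz⟩ := h1
  have key : ∀ (σ : M ≃ₐ[K] M) (m : M), σ μ - μ = m ^ p - m → σ z = z := by
    intro σ m hm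
    obtain ⟨S0, hS0⟩ := lift_exists σ m hm
    apply (algebraMap M N).injective
    rw [← hS0, hz]
    exact hyfix S0
  have hstab : Subgroup.closure ({σ₁, σ₂} : Set (M ≃ₐ[K] M))
      ≤ MulAction.stabilizer (M ≃ₐ[K] M) z := by
    rw [Subgroup.closure_le]
    rintro σ hσ
    simp only [Set.mem_insert_iff, Set.mem_singleton_iff] at hσ
    rcases hσ with rfl | rfl
    · obtain ⟨m, hm⟩ := h1
      exact key _ m hm
    · obtain ⟨m, hm⟩ := h2
      exact key _ m hm
  have hzfix : ∀ σ : M ≃ₐ[K] M, σ z = z := by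
    intro σ
    have : σ ∈ MulAction.stabilizer (M ≃ₐ[K] M) z := hstab (hgen ▸ Subgroup.mem_top σ)
    exact this
  have h3 : z ∈ IntermediateField.fixedField (⊤ : Subgroup (M ≃ₐ[K] M)) := by
    rintro ⟨σ, -⟩
    exact hzfix σ
  have h4 : IntermediateField.fixedField (⊤ : Subgroup (M ≃ₐ[K] M)) = ⊥ := by
    have := (IsGalois.tfae (F := K) (E := M)).out 0 1
    exact this.mp inferInstance
  rw [h4, IntermediateField.mem_bot] at h3
  obtain ⟨w, hw⟩ := h3
  exact ⟨w, by rw [IsScalarTower.algebraMap_apply K M N, hw, hz]⟩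
end

section
/- Let K be a complete discretely valued field of characteristic p. For any integer i < 0, the map ℘ induces an isomorphism of additive groups M_K^i/M_K^{i+1} → M_K^{pi}/M_K^{pi+1}, and for i > 0 an isomorphism M_K^i/M_K^{i+1} → M_K^i/M_K^{i+1}; for i = 0 the induced map on O_K/M_K has kernel F_p. -/
structure DVal (K : Type*) [Field K] where
  v : K → WithTop ℤ
  v_zero : v 0 = ⊤
  v_ne_top : ∀ x : K, x ≠ 0 → v x ≠ ⊤
  v_mul : ∀ x y : K, v (x * y) = v x + v y
  v_add : ∀ x y : K, min (v x) (v y) ≤ v (x + y)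
  v_surj : ∀ n : ℤ, ∃ x : K, v x = (n : WithTop ℤ)
  complete : ∀ f : ℕ → K,
    (∀ n : ℕ, ((n : ℤ) : WithTop ℤ) ≤ v (f (n + 1) - f n)) →
    ∃ x : K, ∀ n : ℕ, ((n : ℤ) : WithTop ℤ) ≤ v (x - f n)

namespace DVal
variable {K : Type*} [Field K] (dv : DVal K)

lemma v_one : dv.v 1 = 0 := by
  have h := dv.v_mul 1 1
  rw [mul_one] at h
  have h1 : dv.v 1 ≠ ⊤ := dv.v_ne_top 1 one_ne_zero
  lift dv.v 1 to ℤ using h1 with a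
  norm_cast at h ⊢
  omega

lemma v_neg (x : K) : dv.v (-x) = dv.v x := by
  have hm1 : dv.v (-1 : K) = 0 := by
    have h := dv.v_mul (-1) (-1)
    rw [neg_mul_neg, one_mul, dv.v_one] at h
    have h1 : dv.v (-1 : K) ≠ ⊤ := dv.v_ne_top _ (by norm_num)
    lift dv.v (-1 : K) to ℤ using h1 with a
    norm_cast at h ⊢
    omega
  have := dv.v_mul (-1) x
  rw [neg_one_mul, hm1, zero_add] at this
  exact this

lemma v_sub (x y : K) : min (dv.v x) (dv.v y) ≤ dv.v (x - y) := by
  have := dv.v_add x (-y)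
  rwa [dv.v_neg y, ← sub_eq_add_neg] at this

lemma v_add_eq_left {x y : K} (h : dv.v x < dv.v y) : dv.v (x + y) = dv.v x := by
  refine le_antisymm ?_ ?_
  · by_contra hc
    push_neg at hc
    have h2 := dv.v_add (x + y) (-y)
    rw [add_neg_cancel_right, dv.v_neg] at h2
    rcases min_le_iff.mp h2 with h3 | h3
    · exact absurd (lt_of_lt_of_le hc h3) (lt_irrefl _)
    · exact absurd (lt_of_lt_of_le h h3) (lt_irrefl _)
  · have := dv.v_add x y
    rwa [min_eq_left h.le] at this

lemma v_pow_ge {x : K} {i : ℤ} (h : (i : WithTop ℤ) ≤ dv.v x) (n : ℕ) :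
    (((n : ℤ) * i : ℤ) : WithTop ℤ) ≤ dv.v (x ^ n) := by
  induction n with
  | zero => simp [dv.v_one]
  | succ n ih =>
    rw [pow_succ, dv.v_mul]
    have h2 : (((n : ℤ) * i + i : ℤ) : WithTop ℤ) ≤ dv.v (x ^ n) + dv.v x := by
      push_cast
      exact add_le_add ih h
    have e : ((n + 1 : ℕ) : ℤ) * i = (n : ℤ) * i + i := by push_cast; ring
    rw [e]
    exact h2

lemma v_pow_eq {x : K} {i : ℤ} (h : dv.v x = (i : WithTop ℤ)) (n : ℕ) :
    dv.v (x ^ n) = (((n : ℤ) * i : ℤ) : WithTop ℤ) := by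
  induction n with
  | zero => simp [dv.v_one]
  | succ n ih =>
    rw [pow_succ, dv.v_mul, ih, h]
    have e : ((n + 1 : ℕ) : ℤ) * i = (n : ℤ) * i + i := by push_cast; ring
    rw [e]
    push_cast
    rfl

lemma v_nat_nonneg (n : ℕ) : (0 : WithTop ℤ) ≤ dv.v (n : K) := by
  induction n with
  | zero => simp [dv.v_zero]
  | succ n ih =>
    push_cast
    have := dv.v_add (n : K) 1
    rw [dv.v_one] at this
    exact le_trans (le_min ih le_rfl) this

lemma v_prod {ι : Type*} (s : Finset ι) (f : ι → K) :
    dv.v (∏ a ∈ s, f a) = ∑ a ∈ s, dv.v (f a) := by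
  classical
  induction s using Finset.induction_on with
  | empty => simp [dv.v_one]
  | insert a s hx ih => rw [Finset.prod_insert hx, Finset.sum_insert hx, dv.v_mul, ih]

lemma eq_coe_of_between {a : WithTop ℤ} {i : ℤ} (h1 : (i : WithTop ℤ) ≤ a)
    (h2 : ¬ ((i + 1 : ℤ) : WithTop ℤ) ≤ a) : a = (i : WithTop ℤ) := by
  have hne : a ≠ ⊤ := by rintro rfl; exact h2 le_top
  lift a to ℤ using hne with k
  norm_cast at h1 h2 ⊢
  omega

lemma wt_eq_zero {a : WithTop ℤ} (h0 : (0 : WithTop ℤ) ≤ a)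
    (h1 : ¬ (1 : WithTop ℤ) ≤ a) : a = 0 := by
  have hne : a ≠ ⊤ := by rintro rfl; exact h1 le_top
  lift a to ℤ using hne with k
  norm_cast at h0 h1 ⊢
  omega

end DVal

open Polynomial in
lemma frob_factor (p : ℕ) (hp : p.Prime) {K : Type*} [Field K] [CharP K p] (x : K) :
    x ^ p - x = ∏ n ∈ Finset.range p, (x - (n : K)) := by
  haveI := Fact.mk hp
  have hq : Fintype.card (ZMod p) = p := ZMod.card p
  have hroots := FiniteField.roots_X_pow_card_sub_X (ZMod p)
  rw [hq] at hroots
  have key : (X ^ p - X : (ZMod p)[X]) = ∏ a : ZMod p, (X - C a) := by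
    have hmonic : (X ^ p - X : (ZMod p)[X]).Monic :=
      monic_X_pow_sub (by rw [degree_X]; exact_mod_cast hp.one_lt)
    have hdeg : (X ^ p - X : (ZMod p)[X]).natDegree = p :=
      FiniteField.X_pow_card_sub_X_natDegree_eq _ hp.one_lt
    have := prod_multiset_X_sub_C_of_monic_of_roots_card_eq hmonic
      (by rw [hroots, hdeg]; exact_mod_cast hq)
    rw [← this, hroots]
    rw [Finset.prod_eq_multiset_prod]
  have e1 := congrArg (fun q : (ZMod p)[X] => Polynomial.eval x
    (Polynomial.map (ZMod.castHom (dvd_refl p) K) q)) key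
  simp only [Polynomial.map_sub, Polynomial.map_pow, Polynomial.map_X, Polynomial.map_prod,
    Polynomial.map_C, Polynomial.eval_sub, Polynomial.eval_pow, Polynomial.eval_X,
    Polynomial.eval_prod, Polynomial.eval_C, ZMod.castHom_apply] at e1
  rw [e1]
  refine Finset.prod_bij' (fun a _ => a.val) (fun n _ => (n : ZMod p)) ?_ ?_ ?_ ?_ ?_
  · intro a _; exact Finset.mem_range.mpr (ZMod.val_lt a)
  · intro n _; exact Finset.mem_univ _
  · intro a _; exact ZMod.natCast_rightInverse a
  · intro n hn; exact ZMod.val_cast_of_lt (Finset.mem_range.mp hn)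
  · intro a _
    congr 1
    rw [← map_natCast (ZMod.castHom (dvd_refl p) K) a.val, ZMod.natCast_rightInverse a,
      ZMod.castHom_apply]

/-- For `i < 0`, `℘` induces an isomorphism `M_K^i/M_K^{i+1} → M_K^{pi}/M_K^{pi+1}`;
for `i > 0` an isomorphism `M_K^i/M_K^{i+1} → M_K^i/M_K^{i+1}`; and for `i = 0`
the induced map on `O_K/M_K` has kernel `𝔽_p`.  (All statements are phrased
elementwise in terms of the valuation.) -/
theorem stmt13 (p : ℕ) (hp : p.Prime) {K : Type*} [Field K] [CharP K p]
    (dv : DVal K)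
    (hperf : ∀ x : K, 0 ≤ dv.v x →
      ∃ y : K, 0 ≤ dv.v y ∧ (1 : WithTop ℤ) ≤ dv.v (x - y ^ p)) :
    (∀ i : ℤ, i < 0 →
      (∀ x : K, (i : WithTop ℤ) ≤ dv.v x →
        ((p * i : ℤ) : WithTop ℤ) ≤ dv.v (x ^ p - x)) ∧
      (∀ x : K, (i : WithTop ℤ) ≤ dv.v x →
        ((p * i + 1 : ℤ) : WithTop ℤ) ≤ dv.v (x ^ p - x) →
        ((i + 1 : ℤ) : WithTop ℤ) ≤ dv.v x) ∧
      (∀ y : K, ((p * i : ℤ) : WithTop ℤ) ≤ dv.v y →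
        ∃ x : K, (i : WithTop ℤ) ≤ dv.v x ∧
          ((p * i + 1 : ℤ) : WithTop ℤ) ≤ dv.v (x ^ p - x - y))) ∧
    (∀ i : ℤ, 0 < i →
      (∀ x : K, (i : WithTop ℤ) ≤ dv.v x →
        (i : WithTop ℤ) ≤ dv.v (x ^ p - x)) ∧
      (∀ x : K, (i : WithTop ℤ) ≤ dv.v x →
        ((i + 1 : ℤ) : WithTop ℤ) ≤ dv.v (x ^ p - x) →
        ((i + 1 : ℤ) : WithTop ℤ) ≤ dv.v x) ∧
      (∀ y : K, (i : WithTop ℤ) ≤ dv.v y →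
        ∃ x : K, (i : WithTop ℤ) ≤ dv.v x ∧
          ((i + 1 : ℤ) : WithTop ℤ) ≤ dv.v (x ^ p - x - y))) ∧
    (∀ x : K, (0 : WithTop ℤ) ≤ dv.v x →
      ((1 : WithTop ℤ) ≤ dv.v (x ^ p - x) ↔
        ∃ n : ℕ, n < p ∧ (1 : WithTop ℤ) ≤ dv.v (x - (n : K)))) := by
  haveI := Fact.mk hp
  have hp2 : (2 : ℤ) ≤ (p : ℤ) := by exact_mod_cast hp.two_le
  refine ⟨?_, ?_, ?_⟩
  · -- i < 0
    intro i hi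
    refine ⟨?_, ?_, ?_⟩
    · intro x hx
      have h1 : (((p : ℤ) * i : ℤ) : WithTop ℤ) ≤ dv.v (x ^ p) := dv.v_pow_ge hx p
      have h2 : (((p : ℤ) * i : ℤ) : WithTop ℤ) ≤ dv.v x := by
        refine le_trans ?_ hx
        exact_mod_cast (show (p : ℤ) * i ≤ i by nlinarith)
      exact le_trans (le_min h1 h2) (dv.v_sub (x ^ p) x)
    · intro x hx hx2
      by_contra hc
      have hxe : dv.v x = (i : WithTop ℤ) := DVal.eq_coe_of_between hx hc
      have hpow : dv.v (x ^ p) = (((p : ℤ) * i : ℤ) : WithTop ℤ) := dv.v_pow_eq hxe p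
      have hlt : dv.v (x ^ p) < dv.v (-x) := by
        rw [dv.v_neg, hxe, hpow]
        exact_mod_cast (show (p : ℤ) * i < i by nlinarith)
      have heq : dv.v (x ^ p - x) = dv.v (x ^ p) := by
        rw [sub_eq_add_neg]; exact dv.v_add_eq_left hlt
      rw [heq, hpow] at hx2
      have : (p : ℤ) * i + 1 ≤ (p : ℤ) * i := by exact_mod_cast hx2
      omega
    · intro y hy
      obtain ⟨t, ht⟩ := dv.v_surj i
      have ht0 : t ≠ 0 := by
        intro h; rw [h, dv.v_zero] at ht; exact (WithTop.top_ne_coe) ht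
      have htinv : dv.v t⁻¹ = ((-i : ℤ) : WithTop ℤ) := by
        have hm := dv.v_mul t t⁻¹
        rw [mul_inv_cancel₀ ht0, dv.v_one, ht] at hm
        have hne : dv.v t⁻¹ ≠ ⊤ := dv.v_ne_top _ (inv_ne_zero ht0)
        lift dv.v t⁻¹ to ℤ using hne with k
        norm_cast at hm ⊢
        omega
      set w := y * (t⁻¹) ^ p with hw
      have hw0 : (0 : WithTop ℤ) ≤ dv.v w := by
        rw [hw, dv.v_mul, dv.v_pow_eq htinv p]
        have e : (0 : WithTop ℤ) = (((p : ℤ) * i : ℤ) : WithTop ℤ) +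
            (((p : ℤ) * (-i) : ℤ) : WithTop ℤ) := by
          norm_cast; ring
        rw [e]
        exact add_le_add_left hy _
      obtain ⟨z, hz0, hz1⟩ := hperf w hw0
      refine ⟨z * t, ?_, ?_⟩
      · rw [dv.v_mul, ht]
        calc (i : WithTop ℤ) = 0 + (i : WithTop ℤ) := by rw [zero_add]
          _ ≤ dv.v z + (i : WithTop ℤ) := add_le_add_left hz0 _
      · have halg : (z * t) ^ p - (z * t) - y = (-(t ^ p)) * (w - z ^ p) + (-(z * t)) := by
          rw [hw]
          field_simp
          linear_combination y * (by rw [← mul_pow, mul_inv_cancel₀ ht0, one_pow] : t ^ p * t⁻¹ ^ p = 1)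
        rw [halg]
        have hterm1 : (((p : ℤ) * i + 1 : ℤ) : WithTop ℤ) ≤ dv.v ((-(t ^ p)) * (w - z ^ p)) := by
          rw [dv.v_mul, dv.v_neg, dv.v_pow_eq ht p]
          have e : (((p : ℤ) * i + 1 : ℤ) : WithTop ℤ) =
              (((p : ℤ) * i : ℤ) : WithTop ℤ) + (1 : WithTop ℤ) := by
            norm_cast
          rw [e]
          exact add_le_add_right hz1 _
        have hterm2 : (((p : ℤ) * i + 1 : ℤ) : WithTop ℤ) ≤ dv.v (-(z * t)) := by
          rw [dv.v_neg, dv.v_mul, ht]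
          have h1 : ((i : ℤ) : WithTop ℤ) ≤ dv.v z + (i : WithTop ℤ) := by
            calc ((i : ℤ) : WithTop ℤ) = 0 + (i : WithTop ℤ) := by rw [zero_add]
              _ ≤ dv.v z + (i : WithTop ℤ) := add_le_add_left hz0 _
          refine le_trans ?_ h1
          exact_mod_cast (show (p : ℤ) * i + 1 ≤ i by nlinarith)
        exact le_trans (le_min hterm1 hterm2) (dv.v_add _ _)
  · -- i > 0
    intro i hi
    refine ⟨?_, ?_, ?_⟩
    · intro x hx
      have h1 : (((p : ℤ) * i : ℤ) : WithTop ℤ) ≤ dv.v (x ^ p) := dv.v_pow_ge hx p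
      have h1' : (i : WithTop ℤ) ≤ dv.v (x ^ p) := by
        refine le_trans ?_ h1
        exact_mod_cast (show i ≤ (p : ℤ) * i by nlinarith)
      exact le_trans (le_min h1' hx) (dv.v_sub (x ^ p) x)
    · intro x hx hx2
      by_contra hc
      have hxe : dv.v x = (i : WithTop ℤ) := DVal.eq_coe_of_between hx hc
      have hpow : dv.v (x ^ p) = (((p : ℤ) * i : ℤ) : WithTop ℤ) := dv.v_pow_eq hxe p
      have hlt : dv.v (-x) < dv.v (x ^ p) := by
        rw [dv.v_neg, hxe, hpow]
        exact_mod_cast (show i < (p : ℤ) * i by nlinarith)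
      have heq : dv.v (x ^ p - x) = dv.v (-x) := by
        rw [sub_eq_neg_add]; exact dv.v_add_eq_left hlt
      rw [heq, dv.v_neg, hxe] at hx2
      have : i + 1 ≤ i := by exact_mod_cast hx2
      omega
    · intro y hy
      refine ⟨-y, by rwa [dv.v_neg], ?_⟩
      have halg : (-y) ^ p - (-y) - y = (-y) ^ p := by ring
      rw [halg]
      have hy' : (i : WithTop ℤ) ≤ dv.v (-y) := by rwa [dv.v_neg]
      have h1 : (((p : ℤ) * i : ℤ) : WithTop ℤ) ≤ dv.v ((-y) ^ p) := dv.v_pow_ge hy' p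
      refine le_trans ?_ h1
      exact_mod_cast (show i + 1 ≤ (p : ℤ) * i by nlinarith)
  · -- i = 0
    intro x hx
    constructor
    · intro h1
      have hfac := frob_factor p hp x
      have hv := dv.v_prod (Finset.range p) (fun n => x - (n : K))
      rw [← hfac] at hv
      by_contra hc
      push_neg at hc
      have hall : ∀ n ∈ Finset.range p, dv.v (x - (n : K)) = 0 := by
        intro n hn
        have hge : (0 : WithTop ℤ) ≤ dv.v (x - (n : K)) :=
          le_trans (le_min hx (dv.v_nat_nonneg n)) (dv.v_sub x (n : K))
        exact DVal.wt_eq_zero hge (not_le.mpr (hc n (Finset.mem_range.mp hn)))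
      rw [hv, Finset.sum_eq_zero hall] at h1
      have : (1 : ℤ) ≤ 0 := by exact_mod_cast h1
      omega
    · rintro ⟨n, hn, hvn⟩
      have hnp : ((n : K)) ^ p = (n : K) := by
        have h := congrArg (ZMod.castHom (dvd_refl p) K) (ZMod.pow_card (n : ZMod p))
        rwa [map_pow, map_natCast] at h
      have hsplit : x ^ p - x = (x - n) ^ p - (x - n) := by
        have h := add_pow_char (R := K) (x - (n : K)) (n : K)
        rw [sub_add_cancel] at h
        rw [h, hnp]; ring
      rw [hsplit]
      have hvn' : ((1 : ℤ) : WithTop ℤ) ≤ dv.v (x - n) := by exact_mod_cast hvn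
      have h1 : (((p : ℤ) * 1 : ℤ) : WithTop ℤ) ≤ dv.v ((x - n) ^ p) := dv.v_pow_ge hvn' p
      have h1' : (1 : WithTop ℤ) ≤ dv.v ((x - n) ^ p) := by
        refine le_trans ?_ h1
        exact_mod_cast (show (1 : ℤ) ≤ (p : ℤ) * 1 by nlinarith)
      exact le_trans (le_min h1' hvn) (dv.v_sub _ _)
end

section
/- Let K be a local field of characteristic p, L = K(y) a ramified C_p-extension with y^p − y = β, v_K(β) = −b < 0, p ∤ b. If ℓ ∈ L satisfies v_L(ℓ) > −b, then ℓ ∈ L^℘ + K. -/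
namespace DVal

variable {F : Type*} [Field F] (d : DVal F)

theorem v_eq_top_iff {x : F} : d.v x = ⊤ ↔ x = 0 := by
  constructor
  · intro h; by_contra hx; exact d.v_ne_top x hx h
  · rintro rfl; exact d.v_zero

theorem v_one_s16 : d.v 1 = 0 := by
  have h := d.v_mul 1 1
  rw [one_mul] at h
  have h1 : d.v 1 ≠ ⊤ := d.v_ne_top 1 one_ne_zero
  lift d.v 1 to ℤ using h1 with a ha
  rw [← WithTop.coe_add, WithTop.coe_eq_coe] at h
  norm_cast
  omega

theorem v_neg_s16 (x : F) : d.v (-x) = d.v x := by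
  have hm : d.v (-1 : F) = 0 := by
    have h := d.v_mul (-1) (-1)
    rw [neg_mul_neg, one_mul, d.v_one_s16] at h
    have h1 : d.v (-1 : F) ≠ ⊤ := d.v_ne_top _ (by norm_num)
    lift d.v (-1 : F) to ℤ using h1 with a ha
    rw [← WithTop.coe_add, ← WithTop.coe_zero, WithTop.coe_eq_coe] at h
    norm_cast
    omega
  have := d.v_mul (-1) x
  rw [neg_one_mul, hm, zero_add] at this
  exact this

theorem v_sub_s16 (x z : F) : min (d.v x) (d.v z) ≤ d.v (x - z) := by
  have := d.v_add x (-z)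
  rw [d.v_neg_s16 z] at this
  simpa [sub_eq_add_neg] using this

theorem v_add_eq_left_s16 {x z : F} (h : d.v x < d.v z) : d.v (x + z) = d.v x := by
  refine le_antisymm ?_ ?_
  · by_contra hc
    push_neg at hc
    have h2 : d.v x = d.v (x + z - z) := by ring_nf
    have := d.v_sub_s16 (x + z) z
    rw [← h2] at this
    have : min (d.v (x + z)) (d.v z) ≤ d.v x := this
    rcases min_le_iff.mp this with h3 | h3
    · exact absurd h3 (not_le.mpr hc)
    · exact absurd h3 (not_le.mpr h)
  · have := d.v_add x z
    rwa [min_eq_left h.le] at this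

theorem v_pow (x : F) (n : ℕ) : d.v (x ^ n) = n • d.v x := by
  induction n with
  | zero => simpa using d.v_one_s16
  | succ n ih => rw [pow_succ, d.v_mul, ih, succ_nsmul]

theorem v_natCast_nonneg (n : ℕ) : (0 : WithTop ℤ) ≤ d.v (n : F) := by
  induction n with
  | zero => simp [d.v_zero]
  | succ n ih =>
    push_cast
    refine le_trans ?_ (d.v_add n 1)
    rw [d.v_one_s16]
    exact le_min ih le_rfl

theorem v_sum_ge {ι : Type*} (s : Finset ι) (f : ι → F) (c : WithTop ℤ)
    (h : ∀ i ∈ s, c ≤ d.v (f i)) :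
    c ≤ d.v (∑ i ∈ s, f i) := by
  classical
  induction s using Finset.induction with
  | empty => simp [d.v_zero]
  | @insert a s' hx ih =>
    rw [Finset.sum_insert hx]
    refine le_trans ?_ (d.v_add _ _)
    exact le_min (h a (Finset.mem_insert_self a s'))
      (ih fun i hi => h i (Finset.mem_insert_of_mem hi))

theorem eq_zero_of_forall_le {x : F} (h : ∀ n : ℕ, ((n : ℤ) : WithTop ℤ) ≤ d.v x) :
    x = 0 := by
  by_contra hx
  have h1 : d.v x ≠ ⊤ := d.v_ne_top x hx
  lift d.v x to ℤ using h1 with a ha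
  have := h (a.toNat + 1)
  rw [WithTop.coe_le_coe] at this
  omega

theorem v_sum_distinct {ι : Type*} [DecidableEq ι] (s : Finset ι) (x : ι → F)
    (hdist : ∀ i ∈ s, ∀ j ∈ s, i ≠ j → d.v (x i) ≠ ⊤ → d.v (x j) ≠ ⊤ →
      d.v (x i) ≠ d.v (x j)) :
    d.v (∑ i ∈ s, x i) = s.inf (fun i => d.v (x i)) := by
  induction s using Finset.induction with
  | empty => simp [d.v_zero]
  | @insert a s' hx ih =>
    have ih' := ih (fun i hi j hj => hdist i (Finset.mem_insert_of_mem hi)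
      j (Finset.mem_insert_of_mem hj))
    rw [Finset.sum_insert hx, Finset.inf_insert]
    rcases lt_trichotomy (d.v (x a)) (s'.inf (fun i => d.v (x i))) with h | h | h
    · rw [d.v_add_eq_left_s16 (by rw [ih']; exact h), min_eq_left h.le]
    · rcases eq_or_ne (d.v (x a)) ⊤ with htop | htop
      · have hs0 : ∑ i ∈ s', x i = 0 := by
          rw [← d.v_eq_top_iff, ih', ← h, htop]
        have ha0 : x a = 0 := d.v_eq_top_iff.mp htop
        rw [hs0, ha0, add_zero, d.v_zero, ← h, htop]
        simp
      · exfalso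
        have hne : s'.Nonempty := by
          by_contra hne
          rw [Finset.not_nonempty_iff_eq_empty] at hne
          subst hne
          simp at h
          exact htop h
        obtain ⟨i, hi, hieq⟩ := Finset.exists_mem_eq_inf s' hne (fun i => d.v (x i))
        refine hdist a (Finset.mem_insert_self a s') i (Finset.mem_insert_of_mem hi)
          (fun hai => hx (hai ▸ hi)) htop (by rw [← hieq, ← h]; exact htop) ?_
        rw [h, hieq]
    · rw [add_comm, d.v_add_eq_left_s16 (by rw [ih']; exact h), min_eq_right h.le, ih']

theorem coe_nsmul_int (n : ℕ) (z : ℤ) :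
    (n • ((z : ℤ) : WithTop ℤ)) = (((n : ℤ) * z : ℤ) : WithTop ℤ) := by
  induction n with
  | zero => simp
  | succ n ih =>
    rw [succ_nsmul, ih, ← WithTop.coe_add]
    congr 1
    push_cast
    ring

theorem v_pows_ge (x : F) {γ : WithTop ℤ} (hγ : γ ≤ d.v x) (hγ0 : 0 ≤ γ) (n : ℕ)
    (hn : 1 ≤ n) : γ ≤ d.v (x ^ n) := by
  rw [d.v_pow]
  calc γ = 1 • γ := (one_smul _ _).symm
  _ ≤ n • γ := nsmul_le_nsmul_left hγ0 hn
  _ ≤ n • d.v x := nsmul_le_nsmul_right hγ n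

theorem as_solve (p : ℕ) (hp : p.Prime) [CharP F p] (c : F)
    (hc : ((1 : ℤ) : WithTop ℤ) ≤ d.v c) :
    ∃ a : F, a ^ p - a = c ∧ d.v c ≤ d.v a := by
  haveI : Fact p.Prime := ⟨hp⟩
  have hppos : (0:ℤ) < (p:ℤ) := by exact_mod_cast hp.pos
  rcases eq_or_ne c 0 with rfl | hc0
  · exact ⟨0, by simp [zero_pow hp.ne_zero], le_rfl⟩
  have hctop : d.v c ≠ ⊤ := d.v_ne_top c hc0
  lift d.v c to ℤ using hctop with γ hγ
  have hγ1 : 1 ≤ γ := by exact_mod_cast hc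
  set f : ℕ → F := fun n => -(∑ j ∈ Finset.range n, c ^ (p ^ j)) with hf
  have hvpow : ∀ j : ℕ, d.v (c ^ (p ^ j)) = (((p:ℤ) ^ j * γ : ℤ) : WithTop ℤ) := by
    intro j
    rw [d.v_pow, ← hγ, coe_nsmul_int]
    congr 1
  have hple : ∀ n : ℕ, (n : ℤ) ≤ (p:ℤ) ^ n * γ := by
    intro n
    have h1 : (n : ℤ) < (p : ℤ) ^ n := by
      exact_mod_cast Nat.lt_pow_self (n := n) hp.one_lt
    nlinarith [pow_pos hppos n]
  have hdiff : ∀ n : ℕ, f (n + 1) - f n = -(c ^ (p ^ n)) := by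
    intro n
    simp only [hf, Finset.sum_range_succ]
    ring
  have hcau : ∀ n : ℕ, ((n : ℤ) : WithTop ℤ) ≤ d.v (f (n + 1) - f n) := by
    intro n
    rw [hdiff n, d.v_neg_s16, hvpow n, WithTop.coe_le_coe]
    exact hple n
  obtain ⟨a, ha⟩ := d.complete f hcau
  have hfp : ∀ n : ℕ, (f n) ^ p - f n = c - c ^ (p ^ n) := by
    intro n
    induction n with
    | zero => simp [hf, zero_pow hp.ne_zero]
    | succ n ih =>
      have h1 : f (n + 1) = f n - c ^ (p ^ n) := by
        have := hdiff n
        linear_combination this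
      rw [h1, sub_pow_char]
      have h2 : (c ^ (p ^ n)) ^ p = c ^ (p ^ (n + 1)) := by
        rw [← pow_mul, ← pow_succ]
      rw [h2]
      linear_combination ih
  have key : ∀ n : ℕ, ((n : ℤ) : WithTop ℤ) ≤ d.v (a ^ p - a - c) := by
    intro n
    have hsplit : a ^ p - a - c =
        ((a - f n) ^ p - (a - f n)) + ((f n) ^ p - f n - c) := by
      rw [sub_pow_char]
      ring
    rw [hsplit]
    have h1 : ((n : ℤ) : WithTop ℤ) ≤ d.v ((a - f n) ^ p - (a - f n)) := by
      refine le_trans (le_min ?_ (ha n)) (d.v_sub_s16 _ _)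
      refine d.v_pows_ge (a - f n) (ha n) ?_ p hp.one_le
      exact_mod_cast Int.ofNat_nonneg n
    have h2 : ((n : ℤ) : WithTop ℤ) ≤ d.v ((f n) ^ p - f n - c) := by
      have h3 : (f n) ^ p - f n - c = -(c ^ (p ^ n)) := by
        rw [hfp n]; ring
      rw [h3, d.v_neg_s16, hvpow n, WithTop.coe_le_coe]
      exact hple n
    exact le_trans (le_min h1 h2) (d.v_add _ _)
  have h0 : a ^ p - a - c = 0 := d.eq_zero_of_forall_le key
  refine ⟨a, by linear_combination h0, ?_⟩
  have hvfn : ∀ n : ℕ, ((γ : ℤ) : WithTop ℤ) ≤ d.v (f n) := by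
    intro n
    rw [hf]
    simp only
    rw [d.v_neg_s16]
    refine d.v_sum_ge _ _ _ ?_
    intro j _
    rw [hvpow j, WithTop.coe_le_coe]
    nlinarith [pow_pos hppos j, one_le_pow₀ (by omega : (1:ℤ) ≤ (p:ℤ)) (n := j)]
  set N : ℕ := γ.toNat with hN
  have haN := ha N
  have : min (d.v (a - f N)) (d.v (f N)) ≤ d.v a := by
    have := d.v_add (a - f N) (f N)
    rwa [sub_add_cancel] at this
  refine le_trans (le_min ?_ (hvfn N)) this
  refine le_trans ?_ haN
  rw [WithTop.coe_le_coe]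
  omega

theorem telescope_ge (m : ℤ) (g : ℕ → F)
    (hg : ∀ n : ℕ, ((m + n : ℤ) : WithTop ℤ) ≤ d.v (g n)) (k j : ℕ) (hkj : k ≤ j) :
    ((m + k : ℤ) : WithTop ℤ) ≤
      d.v ((∑ i ∈ Finset.range j, g i) - ∑ i ∈ Finset.range k, g i) := by
  rw [← Finset.sum_Ico_eq_sub _ hkj]
  refine d.v_sum_ge _ _ _ ?_
  intro i hi
  have hki : k ≤ i := (Finset.mem_Ico.mp hi).1
  refine le_trans ?_ (hg i)
  rw [WithTop.coe_le_coe]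
  omega

theorem lim_sum (m : ℤ) (g : ℕ → F)
    (hg : ∀ n : ℕ, ((m + n : ℤ) : WithTop ℤ) ≤ d.v (g n)) :
    ∃ x : F, ∀ n : ℕ, ((m + n : ℤ) : WithTop ℤ) ≤
      d.v (x - ∑ j ∈ Finset.range n, g j) := by
  set N : ℕ := (-m).toNat with hN
  set f : ℕ → F := fun n => ∑ j ∈ Finset.range (n + N), g j with hf
  have hcau : ∀ n : ℕ, ((n : ℤ) : WithTop ℤ) ≤ d.v (f (n + 1) - f n) := by
    intro n
    have := d.telescope_ge m g hg (n + N) (n + 1 + N) (by omega)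
    refine le_trans ?_ this
    rw [WithTop.coe_le_coe]
    omega
  obtain ⟨x, hx⟩ := d.complete f hcau
  refine ⟨x, fun k => ?_⟩
  set n : ℕ := (m + k).toNat with hn
  have hkj : k ≤ n + N := by omega
  have h1 : ((m + k : ℤ) : WithTop ℤ) ≤ d.v (x - f n) := by
    refine le_trans ?_ (hx n)
    rw [WithTop.coe_le_coe]
    omega
  have h2 := d.telescope_ge m g hg k (n + N) hkj
  have h3 : ((m + k : ℤ) : WithTop ℤ) ≤ d.v (f n - ∑ j ∈ Finset.range k, g j) := h2
  have h4 : x - ∑ j ∈ Finset.range k, g j =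
      (x - f n) + (f n - ∑ j ∈ Finset.range k, g j) := by ring
  rw [h4]
  exact le_trans (le_min h1 h3) (d.v_add _ _)

end DVal

section Main

variable {p : ℕ} (hp : p.Prime) {K L : Type*} [Field K] [Field L]
    [Algebra K L] [CharP K p] (dvK : DVal K) (dvL : DVal L)
    (hcompat : ∀ x : K,
      dvL.v (algebraMap K L x) = ((p : ℤ) : WithTop ℤ) * dvK.v x)
    {b : ℕ} (hb : 0 < b) (hbp : ¬ p ∣ b)
    {y : L} {β : K} (hy : y ^ p - y = algebraMap K L β)
    (hβ : dvK.v β = ((-(b : ℤ) : ℤ) : WithTop ℤ))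

include hp hcompat hb hy hβ

theorem hcompat_coe (c : K) {z : ℤ} (hz : dvK.v c = (z : WithTop ℤ)) :
    dvL.v (algebraMap K L c) = (((p : ℤ) * z : ℤ) : WithTop ℤ) := by
  rw [hcompat c, hz, ← WithTop.coe_mul]

theorem charL : CharP L p := charP_of_injective_algebraMap (algebraMap K L).injective p

theorem beta_ne : β ≠ 0 := by
  intro h
  rw [h, dvK.v_zero] at hβ
  exact (WithTop.top_ne_coe) hβ

theorem vbetaL : dvL.v (algebraMap K L β) = ((-((p : ℤ) * b) : ℤ) : WithTop ℤ) := by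
  rw [hcompat_coe hp dvK dvL hcompat hb hy hβ β hβ]
  congr 1
  ring

theorem y_ne : y ≠ 0 := by
  intro h
  rw [h] at hy
  have : algebraMap K L β = 0 := by
    rw [← hy, zero_pow hp.ne_zero, sub_zero]
  have hβ0 : β = 0 := by
    exact (map_eq_zero _).mp this
  exact beta_ne hp dvK dvL hcompat hb hy hβ hβ0

theorem vy : dvL.v y = ((-(b : ℤ) : ℤ) : WithTop ℤ) := by
  have hyt : dvL.v y ≠ ⊤ := dvL.v_ne_top y (y_ne hp dvK dvL hcompat hb hy hβ)
  lift dvL.v y to ℤ using hyt with w hw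
  have hypv : dvL.v (y ^ p) = (((p : ℤ) * w : ℤ) : WithTop ℤ) := by
    rw [dvL.v_pow, ← hw, DVal.coe_nsmul_int]
  have hvsub : dvL.v (y ^ p - y) = ((-((p:ℤ) * b) : ℤ) : WithTop ℤ) := by
    rw [hy]; exact vbetaL hp dvK dvL hcompat hb hy hβ
  by_cases hwneg : w < 0
  · have hlt : dvL.v (y ^ p) < dvL.v (-y) := by
      rw [hypv, dvL.v_neg_s16, ← hw, WithTop.coe_lt_coe]
      have hp2 : (2:ℤ) ≤ (p:ℤ) := by exact_mod_cast hp.two_le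
      nlinarith
    have := dvL.v_add_eq_left_s16 hlt
    rw [← sub_eq_add_neg] at this
    rw [hvsub, hypv] at this
    rw [WithTop.coe_eq_coe] at this
    have hpb : (p:ℤ) ≠ 0 := by exact_mod_cast hp.ne_zero
    have h5 : (p:ℤ) * (b:ℤ) = (p:ℤ) * (-w) := by linarith
    have h6 := mul_left_cancel₀ hpb h5
    rw [WithTop.coe_eq_coe]
    omega
  · exfalso
    push_neg at hwneg
    have h1 : min (dvL.v (y ^ p)) (dvL.v (-y)) ≤ dvL.v (y ^ p - y) := by
      have := dvL.v_add (y ^ p) (-y)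
      rwa [← sub_eq_add_neg] at this
    rw [hvsub, hypv, dvL.v_neg_s16, ← hw] at h1
    have hppos : (0:ℤ) < (p:ℤ) := by exact_mod_cast hp.pos
    rcases min_le_iff.mp h1 with h | h <;> rw [WithTop.coe_le_coe] at h <;> nlinarith

theorem vterm (c : K) {z : ℤ} (hz : dvK.v c = (z : WithTop ℤ)) (i : ℕ) :
    dvL.v (algebraMap K L c * y ^ i) =
      (((p : ℤ) * z - (i : ℤ) * b : ℤ) : WithTop ℤ) := by
  rw [dvL.v_mul, hcompat_coe hp dvK dvL hcompat hb hy hβ c hz, dvL.v_pow,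
    vy hp dvK dvL hcompat hb hy hβ, DVal.coe_nsmul_int, ← WithTop.coe_add]
  congr 1
  ring

theorem term_mono {c c' : K} (h : dvK.v c ≤ dvK.v c') (i : ℕ) :
    dvL.v (algebraMap K L c * y ^ i) ≤ dvL.v (algebraMap K L c' * y ^ i) := by
  rw [dvL.v_mul, dvL.v_mul, hcompat, hcompat]
  refine add_le_add ?_ le_rfl
  rcases eq_or_ne (dvK.v c) ⊤ with ht | ht
  · have h2 : dvK.v c' = ⊤ := top_le_iff.mp (ht ▸ h)
    rw [ht, h2]
  · have ht' : dvK.v c' ≠ ⊤ ∨ dvK.v c' = ⊤ := by tauto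
    lift dvK.v c to ℤ using ht with z hzz
    rcases eq_or_ne (dvK.v c') ⊤ with h2 | h2
    · rw [h2]
      rw [WithTop.mul_top]
      · exact le_top
      · exact_mod_cast hp.ne_zero
    · lift dvK.v c' to ℤ using h2 with z' hz'
      rw [← WithTop.coe_mul, ← WithTop.coe_mul, WithTop.coe_le_coe]
      have : z ≤ z' := by exact_mod_cast h
      have hppos : (0:ℤ) < (p:ℤ) := by exact_mod_cast hp.pos
      nlinarith

end Main

theorem fin_split0 {M : Type*} [AddCommGroup M] {p : ℕ} (hp0 : 0 < p) (f : Fin p → M) :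
    ∑ i : Fin p, f i = f ⟨0, hp0⟩ + ∑ i : Fin p, (if (i : ℕ) = 0 then 0 else f i) := by
  have h : ∑ i : Fin p, (f i - (if (i : ℕ) = 0 then 0 else f i)) = f ⟨0, hp0⟩ := by
    rw [Finset.sum_eq_single ⟨0, hp0⟩]
    · simp
    · intro i _ hne
      have hi : (i : ℕ) ≠ 0 := fun h => hne (Fin.ext h)
      simp [hi]
    · simp
  rw [Finset.sum_sub_distrib] at h
  rw [sub_eq_iff_eq_add] at h
  rw [h]

theorem sum_fin_of_range {M : Type*} [AddCommMonoid M] {p : ℕ} (G : ℕ → M) {i : ℕ}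
    (hi : i ≤ p) :
    ∑ k ∈ Finset.range i, G k = ∑ k : Fin p, (if (k : ℕ) < i then G k else 0) := by
  rw [Fin.sum_univ_eq_sum_range (fun k => if k < i then G k else 0) p]
  rw [← Finset.sum_subset (Finset.range_subset_range.mpr hi)]
  · exact Finset.sum_congr rfl fun k hk => by
      simp [Finset.mem_range.mp hk]
  · intro k _ hk
    have : ¬ k < i := fun h => hk (Finset.mem_range.mpr h)
    simp [this]

def ASRep (p : ℕ) (K : Type*) {L : Type*} [Field K] [Field L] [Algebra K L]
    (dvL : DVal L) (y : L) (m : ℤ) (x : L) : Prop :=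
  ∃ c : Fin p → K, x = ∑ i : Fin p, algebraMap K L (c i) * y ^ (i : ℕ) ∧
    (∀ i : Fin p, (i : ℕ) = 0 → c i = 0) ∧
    ∀ i : Fin p, ((m : ℤ) : WithTop ℤ) ≤ dvL.v (algebraMap K L (c i) * y ^ (i : ℕ))

theorem asrep_zero (p : ℕ) (K : Type*) {L : Type*} [Field K] [Field L] [Algebra K L]
    (dvL : DVal L) (y : L) (m : ℤ) : ASRep p K dvL y m 0 :=
  ⟨fun _ => 0, by simp, fun _ _ => rfl, fun i => by simp [dvL.v_zero]⟩

theorem asrep_add {p : ℕ} {K L : Type*} [Field K] [Field L] [Algebra K L]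
    {dvL : DVal L} {y : L} {m : ℤ} {x x' : L} (h : ASRep p K dvL y m x)
    (h' : ASRep p K dvL y m x') : ASRep p K dvL y m (x + x') := by
  obtain ⟨c, hc, hc0, hcv⟩ := h
  obtain ⟨c', hc', hc0', hcv'⟩ := h'
  refine ⟨fun i => c i + c' i, ?_, fun i hi => by show c i + c' i = 0; rw [hc0 i hi, hc0' i hi, add_zero], ?_⟩
  · rw [hc, hc', ← Finset.sum_add_distrib]
    exact Finset.sum_congr rfl fun i _ => by rw [map_add, add_mul]
  · intro i
    have : algebraMap K L (c i + c' i) * y ^ (i:ℕ) =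
        algebraMap K L (c i) * y ^ (i:ℕ) + algebraMap K L (c' i) * y ^ (i:ℕ) := by
      rw [map_add, add_mul]
    rw [this]
    exact le_trans (le_min (hcv i) (hcv' i)) (dvL.v_add _ _)

theorem asrep_sum {p : ℕ} {K L : Type*} [Field K] [Field L] [Algebra K L]
    {dvL : DVal L} {y : L} {m : ℤ} {ι : Type*} (s : Finset ι) (g : ι → L)
    (h : ∀ i ∈ s, ASRep p K dvL y m (g i)) : ASRep p K dvL y m (∑ i ∈ s, g i) := by
  classical
  induction s using Finset.induction with
  | empty => simpa using asrep_zero p K dvL y m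
  | @insert a s' ha ih =>
    rw [Finset.sum_insert ha]
    exact asrep_add (h a (Finset.mem_insert_self a s'))
      (ih fun i hi => h i (Finset.mem_insert_of_mem hi))

section Main2

variable {p : ℕ} (hp : p.Prime) {K L : Type*} [Field K] [Field L]
    [Algebra K L] [CharP K p] (dvK : DVal K) (dvL : DVal L)
    (hcompat : ∀ x : K,
      dvL.v (algebraMap K L x) = ((p : ℤ) : WithTop ℤ) * dvK.v x)
    {b : ℕ} (hb : 0 < b)
    {y : L} {β : K} (hy : y ^ p - y = algebraMap K L β)
    (hβ : dvK.v β = ((-(b : ℤ) : ℤ) : WithTop ℤ))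

include hp hcompat hb hy hβ

theorem mono_step (m : ℤ) (hm : 1 - (b:ℤ) ≤ m) (i : Fin p) (hi0 : (i:ℕ) ≠ 0) (c : K)
    (hv : ((m : ℤ) : WithTop ℤ) ≤ dvL.v (algebraMap K L c * y ^ (i:ℕ))) :
    ∃ t : L, ∃ k : K, ∃ x' : L,
      ((m : ℤ) : WithTop ℤ) ≤ dvL.v t ∧ ((m : ℤ) : WithTop ℤ) ≤ dvK.v k ∧
      ASRep p K dvL y (m+1) x' ∧
      algebraMap K L c * y ^ (i:ℕ) = (t ^ p - t) + algebraMap K L k + x' := by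
  haveI : CharP L p := charL hp dvK dvL hcompat hb hy hβ
  have hp0 : (0:ℤ) < (p:ℤ) := by exact_mod_cast hp.pos
  have hp2 : (2:ℤ) ≤ (p:ℤ) := by exact_mod_cast hp.two_le
  have hb1 : (1:ℤ) ≤ (b:ℤ) := by exact_mod_cast hb
  have hi1 : (1:ℤ) ≤ (i:ℤ) := by
    have : 1 ≤ (i:ℕ) := Nat.one_le_iff_ne_zero.mpr hi0
    exact_mod_cast this
  rcases eq_or_ne c 0 with rfl | hc0
  · refine ⟨0, 0, 0, ?_, ?_, asrep_zero p K dvL y (m+1), ?_⟩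
    · rw [dvL.v_zero]; exact le_top
    · rw [dvK.v_zero]; exact le_top
    · simp [zero_pow hp.ne_zero]
  have hct := dvK.v_ne_top c hc0
  lift dvK.v c to ℤ using hct with z hz
  have hterm := vterm hp dvK dvL hcompat hb hy hβ c hz.symm (i:ℕ)
  rw [hterm, WithTop.coe_le_coe] at hv
  have hib : (b:ℤ) ≤ (i:ℤ) * b := by nlinarith
  have hpz : 1 ≤ (p:ℤ) * z := by nlinarith
  have hz1 : 1 ≤ z := by
    by_contra hzc
    push_neg at hzc
    nlinarith
  obtain ⟨a, haeq, hva⟩ := dvK.as_solve p hp c (by rw [← hz]; exact_mod_cast hz1)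
  have ha0 : a ≠ 0 := by
    intro h
    rw [h, zero_pow hp.ne_zero, sub_zero] at haeq
    exact hc0 haeq.symm
  have hat := dvK.v_ne_top a ha0
  lift dvK.v a to ℤ using hat with A hA
  have hvca : dvK.v c ≤ dvK.v a := by rw [← hA]; exact hva
  have hzA : z ≤ A := by
    have h' := hva
    rw [← hz] at h'
    exact_mod_cast h'
  set t : L := algebraMap K L a * y ^ (i:ℕ) with ht_def
  set kk : K := -(a ^ p * β ^ (i:ℕ)) with hkk_def
  set G : ℕ → L := fun k =>
    algebraMap K L (a ^ p * β ^ ((i:ℕ) - k) * (((i:ℕ).choose k : ℕ) : K)) * y ^ k with hG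
  set c'' : Fin p → K := fun k => if (k:ℕ) = 0 then 0 else
    (if (k:ℕ) < (i:ℕ) then -(a ^ p * β ^ ((i:ℕ) - (k:ℕ)) * (((i:ℕ).choose (k:ℕ) : ℕ) : K))
      else 0) with hc''
  set x' : L := ∑ k : Fin p, algebraMap K L (c'' k) * y ^ (k:ℕ) with hx'
  have hyp2 : y ^ p = y + algebraMap K L β := by linear_combination hy
  -- Identity A
  have h1 : t ^ p = algebraMap K L (a ^ p) * (y + algebraMap K L β) ^ (i:ℕ) := by
    rw [ht_def, mul_pow, ← map_pow, ← pow_mul, mul_comm (i:ℕ) p, pow_mul, hyp2]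
  have h3 : t ^ p - t =
      algebraMap K L c * y ^ (i:ℕ) + ∑ k ∈ Finset.range (i:ℕ), G k := by
    rw [h1, add_pow, Finset.sum_range_succ]
    have hii : y ^ (i:ℕ) * (algebraMap K L β) ^ ((i:ℕ) - (i:ℕ)) *
        (((i:ℕ).choose (i:ℕ) : ℕ) : L) = y ^ (i:ℕ) := by
      simp
    rw [hii, mul_add, Finset.mul_sum]
    have h4 : ∀ k ∈ Finset.range (i:ℕ),
        algebraMap K L (a ^ p) *
          (y ^ k * (algebraMap K L β) ^ ((i:ℕ) - k) * (((i:ℕ).choose k : ℕ) : L)) = G k := by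
      intro k _
      rw [hG]
      simp only [map_mul, map_pow, map_natCast]
      ring
    rw [Finset.sum_congr rfl h4]
    have h5 : algebraMap K L (a ^ p) * y ^ (i:ℕ) - algebraMap K L a * y ^ (i:ℕ) =
        algebraMap K L c * y ^ (i:ℕ) := by
      rw [← sub_mul, ← map_sub, haeq]
    rw [ht_def]
    linear_combination h5
  -- Identity B
  have hip : (i:ℕ) ≤ p := le_of_lt i.isLt
  have hB : ∑ k ∈ Finset.range (i:ℕ), G k = (-(algebraMap K L kk)) + (-x') := by
    rw [sum_fin_of_range G hip,
      fin_split0 hp.pos (fun k : Fin p => if (k:ℕ) < (i:ℕ) then G (k:ℕ) else 0)]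
    have e0 : (if ((⟨0, hp.pos⟩ : Fin p) : ℕ) < (i:ℕ) then G ((⟨0, hp.pos⟩ : Fin p) : ℕ)
        else 0) = -(algebraMap K L kk) := by
      have h0i : (0:ℕ) < (i:ℕ) := Nat.pos_of_ne_zero hi0
      simp only [if_pos h0i]
      rw [hG, hkk_def]
      simp
    rw [e0]
    congr 1
    rw [hx', ← Finset.sum_neg_distrib]
    refine Finset.sum_congr rfl ?_
    intro k _
    by_cases k0 : (k:ℕ) = 0
    · have hck : c'' k = 0 := by rw [hc'']; simp [k0]
      rw [hck, map_zero, zero_mul, neg_zero, if_pos k0]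
    · by_cases klt : (k:ℕ) < (i:ℕ)
      · have hck : c'' k =
            -(a ^ p * β ^ ((i:ℕ) - (k:ℕ)) * (((i:ℕ).choose (k:ℕ) : ℕ) : K)) := by
          rw [hc'']; simp [k0, klt]
        rw [if_neg k0]
        show (if (k:ℕ) < (i:ℕ) then G (k:ℕ) else 0) = -(algebraMap K L (c'' k) * y ^ (k:ℕ))
        rw [if_pos klt, hck, hG]
        simp only [map_neg, map_mul, map_pow, map_natCast, neg_mul, neg_neg]
      · have hck : c'' k = 0 := by rw [hc'']; simp [k0, klt]
        rw [if_neg k0]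
        show (if (k:ℕ) < (i:ℕ) then G (k:ℕ) else 0) = -(algebraMap K L (c'' k) * y ^ (k:ℕ))
        rw [if_neg klt, hck, map_zero, zero_mul, neg_zero]
  refine ⟨t, kk, x', ?_, ?_, ?_, by linear_combination -h3 - hB⟩
  · -- v t ≥ m
    have := term_mono hp dvK dvL hcompat hb hy hβ hvca (i:ℕ)
    rw [ht_def]
    refine le_trans ?_ this
    rw [hterm, WithTop.coe_le_coe]
    exact hv
  · -- v kk ≥ m
    have hvkk : dvK.v kk = (((p:ℤ) * A - (i:ℤ) * b : ℤ) : WithTop ℤ) := by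
      rw [hkk_def, dvK.v_neg_s16, dvK.v_mul, dvK.v_pow, dvK.v_pow, ← hA, hβ, DVal.coe_nsmul_int,
        DVal.coe_nsmul_int, ← WithTop.coe_add]
      congr 1
      push_cast
      ring
    rw [hvkk, WithTop.coe_le_coe]
    nlinarith [mul_le_mul_of_nonneg_left hzA hp0.le]
  · -- ASRep (m+1) x'
    refine ⟨c'', hx', ?_, ?_⟩
    · intro k hk
      rw [hc'']
      simp [hk]
    · intro k
      by_cases k0 : (k:ℕ) = 0
      · have hck : c'' k = 0 := by rw [hc'']; simp [k0]
        rw [hck, map_zero, zero_mul, dvL.v_zero]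
        exact le_top
      · by_cases klt : (k:ℕ) < (i:ℕ)
        · have hcc : c'' k =
              -(a ^ p * β ^ ((i:ℕ) - (k:ℕ)) * (((i:ℕ).choose (k:ℕ) : ℕ) : K)) := by
            rw [hc'']; simp [k0, klt]
          have hik : ((((i:ℕ) - (k:ℕ)) : ℕ) : ℤ) = (i:ℤ) - (k:ℤ) := by omega
          have hw1 : (((p:ℤ) * A - ((i:ℤ) - (k:ℤ)) * b : ℤ) : WithTop ℤ) ≤ dvK.v (c'' k) := by
            rw [hcc, dvK.v_neg_s16, dvK.v_mul, dvK.v_mul, dvK.v_pow, dvK.v_pow, ← hA, hβ,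
              DVal.coe_nsmul_int, DVal.coe_nsmul_int]
            have e : (((p:ℤ) * A - ((i:ℤ) - (k:ℤ)) * b : ℤ) : WithTop ℤ) =
                ((((p:ℤ) * A : ℤ)) : WithTop ℤ) +
                  (((((i:ℕ) - (k:ℕ) : ℕ) : ℤ) * (-(b:ℤ)) : ℤ) : WithTop ℤ) := by
              rw [← WithTop.coe_add]
              congr 1
              linear_combination ((b:ℤ)) * hik
            rw [e]
            exact le_add_of_nonneg_right (dvK.v_natCast_nonneg _)
          rcases eq_or_ne (dvK.v (c'' k)) ⊤ with hwt | hwt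
          · rw [dvL.v_mul, hcompat, hwt]
            have hpne : ((p : ℤ) : WithTop ℤ) ≠ 0 := by
              exact_mod_cast (by exact_mod_cast hp.ne_zero : ((p:ℤ)) ≠ 0)
            rw [WithTop.mul_top hpne, top_add]
            exact le_top
          · lift dvK.v (c'' k) to ℤ using hwt with W hW
            have hW1 : (p:ℤ) * A - ((i:ℤ) - (k:ℤ)) * b ≤ W := by exact_mod_cast hw1
            have hvt : dvL.v (algebraMap K L (c'' k) * y ^ (k:ℕ)) =
                (((p:ℤ) * W - (k:ℤ) * b : ℤ) : WithTop ℤ) :=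
              vterm hp dvK dvL hcompat hb hy hβ (c'' k) hW.symm (k:ℕ)
            rw [hvt, WithTop.coe_le_coe]
            have hk1 : (1:ℤ) ≤ (k:ℤ) := by
              have : 1 ≤ (k:ℕ) := Nat.one_le_iff_ne_zero.mpr k0
              exact_mod_cast this
            have hki : (k:ℤ) + 1 ≤ (i:ℤ) := by exact_mod_cast klt
            have q1 : m + (i:ℤ) * b ≤ (p:ℤ) * A := by
              nlinarith [mul_le_mul_of_nonneg_left hzA hp0.le]
            have q3 : (p:ℤ) * ((p:ℤ) * A - ((i:ℤ) - (k:ℤ)) * b) ≤ (p:ℤ) * W :=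
              mul_le_mul_of_nonneg_left hW1 hp0.le
            have q4 : (p:ℤ) * (m + (i:ℤ) * b) ≤ (p:ℤ) * ((p:ℤ) * A) :=
              mul_le_mul_of_nonneg_left q1 hp0.le
            have q5 : (b:ℤ) ≤ (k:ℤ) * b :=
              le_mul_of_one_le_left (by linarith) hk1
            have q6 : ((p:ℤ) - 1) * 1 ≤ ((p:ℤ) - 1) * (m + (k:ℤ) * b) :=
              mul_le_mul_of_nonneg_left (by linarith) (by linarith)
            linarith [q3, q4, q6]
        · have hck : c'' k = 0 := by rw [hc'']; simp [k0, klt]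
          rw [hck, map_zero, zero_mul, dvL.v_zero]
          exact le_top

end Main2

theorem asrep_v {p : ℕ} {K L : Type*} [Field K] [Field L] [Algebra K L]
    {dvL : DVal L} {y : L} {m : ℤ} {x : L} (h : ASRep p K dvL y m x) :
    ((m : ℤ) : WithTop ℤ) ≤ dvL.v x := by
  obtain ⟨c, hcx, _, hcv⟩ := h
  rw [hcx]
  exact dvL.v_sum_ge _ _ _ fun i _ => hcv i

section Main3

variable {p : ℕ} (hp : p.Prime) {K L : Type*} [Field K] [Field L]
    [Algebra K L] [CharP K p] (dvK : DVal K) (dvL : DVal L)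
    (hcompat : ∀ x : K,
      dvL.v (algebraMap K L x) = ((p : ℤ) : WithTop ℤ) * dvK.v x)
    {b : ℕ} (hb : 0 < b)
    {y : L} {β : K} (hy : y ^ p - y = algebraMap K L β)
    (hβ : dvK.v β = ((-(b : ℤ) : ℤ) : WithTop ℤ))

include hp hcompat hb hy hβ

theorem rep_step (m : ℤ) (hm : 1 - (b:ℤ) ≤ m) (x : L) (hx : ASRep p K dvL y m x) :
    ∃ t : L, ∃ k : K, ∃ x' : L,
      ((m : ℤ) : WithTop ℤ) ≤ dvL.v t ∧ ((m : ℤ) : WithTop ℤ) ≤ dvK.v k ∧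
      ASRep p K dvL y (m+1) x' ∧ x = (t ^ p - t) + algebraMap K L k + x' := by
  haveI : CharP L p := charL hp dvK dvL hcompat hb hy hβ
  haveI : Fact p.Prime := ⟨hp⟩
  obtain ⟨c, hcx, hc0, hcv⟩ := hx
  have hch : ∀ i : Fin p, ∃ q : L × K × L,
      ((m : ℤ) : WithTop ℤ) ≤ dvL.v q.1 ∧ ((m : ℤ) : WithTop ℤ) ≤ dvK.v q.2.1 ∧
      ASRep p K dvL y (m+1) q.2.2 ∧
      algebraMap K L (c i) * y ^ (i:ℕ) = (q.1 ^ p - q.1) + algebraMap K L q.2.1 + q.2.2 := by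
    intro i
    by_cases hi0 : (i:ℕ) = 0
    · refine ⟨⟨0, 0, 0⟩, ?_, ?_, asrep_zero p K dvL y (m+1), ?_⟩
      · rw [dvL.v_zero]; exact le_top
      · rw [dvK.v_zero]; exact le_top
      · rw [hc0 i hi0]
        simp [zero_pow hp.ne_zero]
    · obtain ⟨t, k, x', h1, h2, h3, h4⟩ :=
        mono_step hp dvK dvL hcompat hb hy hβ m hm i hi0 (c i) (hcv i)
      exact ⟨⟨t, k, x'⟩, h1, h2, h3, h4⟩
  choose q hq1 hq2 hq3 hq4 using hch
  refine ⟨∑ i : Fin p, (q i).1, ∑ i : Fin p, (q i).2.1, ∑ i : Fin p, (q i).2.2,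
    dvL.v_sum_ge _ _ _ fun i _ => hq1 i, dvK.v_sum_ge _ _ _ fun i _ => hq2 i,
    asrep_sum Finset.univ _ fun i _ => hq3 i, ?_⟩
  have hpsum : (∑ i : Fin p, (q i).1) ^ p = ∑ i : Fin p, ((q i).1) ^ p :=
    sum_pow_char p Finset.univ fun i => (q i).1
  rw [hcx, Finset.sum_congr rfl fun i _ => hq4 i, hpsum, map_sum]
  rw [Finset.sum_add_distrib, Finset.sum_add_distrib, Finset.sum_sub_distrib]

end Main3

section Main4

variable {p : ℕ} (hp : p.Prime) {K L : Type*} [Field K] [Field L]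
    [Algebra K L] [CharP K p] (dvK : DVal K) (dvL : DVal L)
    (hcompat : ∀ x : K,
      dvL.v (algebraMap K L x) = ((p : ℤ) : WithTop ℤ) * dvK.v x)
    {b : ℕ} (hb : 0 < b)
    {y : L} {β : K} (hy : y ^ p - y = algebraMap K L β)
    (hβ : dvK.v β = ((-(b : ℤ) : ℤ) : WithTop ℤ))

include hp hcompat hb hy hβ

theorem asrep_complete (m : ℤ) (hm : 1 - (b:ℤ) ≤ m) (x : L)
    (hx : ASRep p K dvL y m x) :
    ∃ T : L, ∃ κ : K, x = (T ^ p - T) + algebraMap K L κ := by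
  haveI : CharP L p := charL hp dvK dvL hcompat hb hy hβ
  haveI : Fact p.Prime := ⟨hp⟩
  have hstep : ∀ (n : ℕ) (z : L), ASRep p K dvL y (m + n) z → ∃ q : L × K × L,
      ((m + n : ℤ) : WithTop ℤ) ≤ dvL.v q.1 ∧
      ((m + n : ℤ) : WithTop ℤ) ≤ dvK.v q.2.1 ∧
      ASRep p K dvL y (m + n + 1) q.2.2 ∧
      z = (q.1 ^ p - q.1) + algebraMap K L q.2.1 + q.2.2 := by
    intro n z hz
    obtain ⟨t, k, x', h1, h2, h3, h4⟩ := rep_step hp dvK dvL hcompat hb hy hβ (m + n)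
      (by have : (0:ℤ) ≤ (n:ℤ) := Int.ofNat_nonneg n; linarith) z hz
    exact ⟨⟨t, k, x'⟩, h1, h2, h3, h4⟩
  choose Q hQ1 hQ2 hQ3 hQ4 using hstep
  let seq : ∀ n : ℕ, {z : L // ASRep p K dvL y (m + n) z} :=
    Nat.rec ⟨x, by simpa using hx⟩ (fun n prev =>
      ⟨(Q n prev.1 prev.2).2.2, by
        have h := hQ3 n prev.1 prev.2
        have e : m + ((n + 1 : ℕ) : ℤ) = m + n + 1 := by push_cast; ring
        rw [e]
        exact h⟩)
  set tseq : ℕ → L := fun n => (Q n (seq n).1 (seq n).2).1 with htseq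
  set kseq : ℕ → K := fun n => (Q n (seq n).1 (seq n).2).2.1 with hkseq
  have hrec : ∀ n : ℕ, (seq (n+1)).1 = (Q n (seq n).1 (seq n).2).2.2 := fun n => rfl
  have hinv : ∀ n : ℕ, x = (∑ j ∈ Finset.range n, ((tseq j) ^ p - tseq j)) +
      algebraMap K L (∑ j ∈ Finset.range n, kseq j) + (seq n).1 := by
    intro n
    induction n with
    | zero => simp; rfl
    | succ n ih =>
      have h4 := hQ4 n (seq n).1 (seq n).2
      rw [Finset.sum_range_succ, Finset.sum_range_succ, map_add, hrec n]
      simp only [htseq, hkseq] at ih ⊢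
      linear_combination ih + h4
  obtain ⟨T, hT⟩ := dvL.lim_sum m tseq
    (fun n => by simpa [htseq] using hQ1 n (seq n).1 (seq n).2)
  obtain ⟨κ, hκ⟩ := dvK.lim_sum m kseq
    (fun n => by simpa [hkseq] using hQ2 n (seq n).1 (seq n).2)
  have hfin : ∀ n : ℕ, 0 ≤ m + (n:ℤ) →
      ((m + n : ℤ) : WithTop ℤ) ≤ dvL.v (x - ((T ^ p - T) + algebraMap K L κ)) := by
    intro n hn
    set St : L := ∑ j ∈ Finset.range n, tseq j with hStdef
    set Sk : K := ∑ j ∈ Finset.range n, kseq j with hSkdef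
    have hSp : ∑ j ∈ Finset.range n, ((tseq j) ^ p - tseq j) = St ^ p - St := by
      rw [Finset.sum_sub_distrib, hStdef, sum_pow_char p (Finset.range n) tseq]
    have hTdec : T ^ p - T = (St ^ p - St) + ((T - St) ^ p - (T - St)) := by
      have h2 : (St + (T - St)) ^ p = St ^ p + (T - St) ^ p := add_pow_char St (T - St) p
      have h3 : St + (T - St) = T := by ring
      rw [h3] at h2
      linear_combination h2
    have hκdec : algebraMap K L κ = algebraMap K L Sk + algebraMap K L (κ - Sk) := by
      rw [← map_add]
      congr 1
      ring
    have heq : x - ((T ^ p - T) + algebraMap K L κ) =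
        (seq n).1 - ((T - St) ^ p - (T - St)) - algebraMap K L (κ - Sk) := by
      rw [hTdec, hκdec, ← hSp]
      linear_combination hinv n
    rw [heq]
    have hr : ((m + n : ℤ) : WithTop ℤ) ≤ dvL.v (seq n).1 := asrep_v (seq n).2
    have ht1 : ((m + n : ℤ) : WithTop ℤ) ≤ dvL.v (T - St) := hT n
    have hmn0 : (0 : WithTop ℤ) ≤ ((m + n : ℤ) : WithTop ℤ) := by exact_mod_cast hn
    have ht2 : ((m + n : ℤ) : WithTop ℤ) ≤ dvL.v ((T - St) ^ p - (T - St)) :=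
      le_trans (le_min (dvL.v_pows_ge _ ht1 hmn0 p hp.one_le) ht1) (dvL.v_sub_s16 _ _)
    have hk1 : ((m + n : ℤ) : WithTop ℤ) ≤ dvK.v (κ - Sk) := hκ n
    have hk2 : ((m + n : ℤ) : WithTop ℤ) ≤ dvL.v (algebraMap K L (κ - Sk)) := by
      rw [hcompat]
      rcases eq_or_ne (dvK.v (κ - Sk)) ⊤ with hwt | hwt
      · rw [hwt, WithTop.mul_top (by exact_mod_cast (by exact_mod_cast hp.ne_zero :
          ((p:ℤ)) ≠ 0) : ((p : ℤ) : WithTop ℤ) ≠ 0)]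
        exact le_top
      · lift dvK.v (κ - Sk) to ℤ using hwt with W hW
        have hW1 : m + n ≤ W := by exact_mod_cast hk1
        rw [← WithTop.coe_mul, WithTop.coe_le_coe]
        have hp1 : (1:ℤ) ≤ (p:ℤ) := by exact_mod_cast hp.one_le
        nlinarith
    refine le_trans (le_min (le_trans (le_min hr ht2) (dvL.v_sub_s16 _ _)) hk2) (dvL.v_sub_s16 _ _)
  have hzero : x - ((T ^ p - T) + algebraMap K L κ) = 0 := by
    apply dvL.eq_zero_of_forall_le
    intro n0
    have h := hfin (n0 + (-m).toNat) (by omega)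
    refine le_trans ?_ h
    rw [WithTop.coe_le_coe]
    omega
  exact ⟨T, κ, by linear_combination hzero⟩

end Main4

theorem wt_add_one_le {r : ℤ} {q : WithTop ℤ} (h : (r : WithTop ℤ) < q) :
    ((r + 1 : ℤ) : WithTop ℤ) ≤ q := by
  induction q using WithTop.recTopCoe with
  | top => exact le_top
  | coe w =>
    rw [WithTop.coe_lt_coe] at h
    rw [WithTop.coe_le_coe]
    omega

/-- Let `L = K(y)` be a ramified `C_p`-extension of a local field `K` of
characteristic `p`, with `y^p − y = β`, `v_K(β) = −b < 0`, `p ∤ b` (so the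
normalized valuation on `L` restricts to `p·v_K` on `K`). If `ℓ ∈ L`
satisfies `v_L(ℓ) > −b`, then `ℓ ∈ L^℘ + K`. -/
theorem stmt16 (p : ℕ) (hp : p.Prime) {K L : Type*} [Field K] [Field L]
    [Algebra K L] [CharP K p] (dvK : DVal K) (dvL : DVal L)
    (hcompat : ∀ x : K,
      dvL.v (algebraMap K L x) = ((p : ℤ) : WithTop ℤ) * dvK.v x)
    (b : ℕ) (hb : 0 < b) (hbp : ¬ p ∣ b)
    (y : L) (β : K) (hy : y ^ p - y = algebraMap K L β)
    (hβ : dvK.v β = ((-(b : ℤ) : ℤ) : WithTop ℤ))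
    (hgen : IntermediateField.adjoin K ({y} : Set L) = ⊤)
    (ℓ : L) (hℓ : ((-(b : ℤ) : ℤ) : WithTop ℤ) < dvL.v ℓ) :
    ∃ t : L, ∃ k : K, ℓ = (t ^ p - t) + algebraMap K L k := by
  classical
  haveI : CharP L p := charL hp dvK dvL hcompat hb hy hβ
  haveI : Fact p.Prime := ⟨hp⟩
  have h0p : (0:ℕ) < p := hp.pos
  have hyp2 : y ^ p = algebraMap K L β + y := by linear_combination hy
  -- ℓ is a K-combination of y^0, ..., y^(p-1)
  have hint : IsIntegral K y := by
    refine ⟨Polynomial.X ^ p - (Polynomial.X + Polynomial.C β), ?_, ?_⟩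
    · apply Polynomial.monic_X_pow_sub
      refine lt_of_le_of_lt (Polynomial.degree_add_le _ _) ?_
      rw [Polynomial.degree_X]
      rw [max_lt_iff]
      constructor
      · exact_mod_cast hp.one_lt
      · refine lt_of_le_of_lt Polynomial.degree_C_le ?_
        exact_mod_cast hp.pos
    · simp only [Polynomial.eval₂_sub, Polynomial.eval₂_pow, Polynomial.eval₂_X,
        Polynomial.eval₂_add, Polynomial.eval₂_C]
      linear_combination hy
  have halg : Algebra.adjoin K ({y} : Set L) = ⊤ := by
    have h1 := IntermediateField.adjoin_simple_toSubalgebra_of_isAlgebraic (F := K) (α := y) hint.isAlgebraic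
    rw [hgen, IntermediateField.top_toSubalgebra] at h1
    exact h1.symm
  set M : Submodule K L := Submodule.span K (Set.range fun i : Fin p => y ^ (i:ℕ)) with hM
  have hpow : ∀ n : ℕ, y ^ n ∈ M := by
    intro n
    induction n using Nat.strong_induction_on with
    | _ n ih =>
      by_cases hlt : n < p
      · exact Submodule.subset_span ⟨⟨n, hlt⟩, rfl⟩
      · push_neg at hlt
        have hp2 : 2 ≤ p := hp.two_le
        have h2 : y ^ n = y ^ (n - p + 1) + β • y ^ (n - p) := by
          have h3 : y ^ n = y ^ (n - p) * y ^ p := by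
            rw [← pow_add]
            congr 1
            omega
          rw [h3, hyp2, Algebra.smul_def]
          ring
        rw [h2]
        exact M.add_mem (ih _ (by omega)) (M.smul_mem _ (ih _ (by omega)))
  have hl : ℓ ∈ M := by
    have h2 : ℓ ∈ Algebra.adjoin K ({y} : Set L) := by rw [halg]; trivial
    rw [Algebra.adjoin_singleton_eq_range_aeval] at h2
    obtain ⟨P, hP⟩ := h2
    have hP' : (Polynomial.aeval y) P = ℓ := hP
    rw [← hP', Polynomial.aeval_eq_sum_range]
    exact Submodule.sum_mem M fun i _ => M.smul_mem _ (hpow i)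
  rw [hM, Submodule.mem_span_range_iff_exists_fun] at hl
  obtain ⟨c, hc⟩ := hl
  have hcsum : ℓ = ∑ i : Fin p, algebraMap K L (c i) * y ^ (i:ℕ) := by
    rw [← hc]
    exact Finset.sum_congr rfl fun i _ => Algebra.smul_def _ _
  -- distinct valuations of the monomials
  have hdist : ∀ i ∈ (Finset.univ : Finset (Fin p)), ∀ j ∈ (Finset.univ : Finset (Fin p)),
      i ≠ j → dvL.v (algebraMap K L (c i) * y ^ (i:ℕ)) ≠ ⊤ →
      dvL.v (algebraMap K L (c j) * y ^ (j:ℕ)) ≠ ⊤ →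
      dvL.v (algebraMap K L (c i) * y ^ (i:ℕ)) ≠ dvL.v (algebraMap K L (c j) * y ^ (j:ℕ)) := by
    intro i _ j _ hij hti htj
    have hci : c i ≠ 0 := by
      intro h
      rw [h, map_zero, zero_mul, dvL.v_zero] at hti
      exact hti rfl
    have hcj : c j ≠ 0 := by
      intro h
      rw [h, map_zero, zero_mul, dvL.v_zero] at htj
      exact htj rfl
    have hcit := dvK.v_ne_top _ hci
    have hcjt := dvK.v_ne_top _ hcj
    lift dvK.v (c i) to ℤ using hcit with zi hzi
    lift dvK.v (c j) to ℤ using hcjt with zj hzj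
    rw [vterm hp dvK dvL hcompat hb hy hβ (c i) hzi.symm (i:ℕ),
      vterm hp dvK dvL hcompat hb hy hβ (c j) hzj.symm (j:ℕ)]
    intro heq
    rw [WithTop.coe_eq_coe] at heq
    have hpd : (p:ℤ) ∣ ((i:ℤ) - (j:ℤ)) * b := ⟨zi - zj, by linarith⟩
    have hpp : Prime (p:ℤ) := Nat.prime_iff_prime_int.mp hp
    rcases hpp.dvd_mul.mp hpd with h | h
    · have hne : (i:ℤ) - (j:ℤ) ≠ 0 := by
        intro h0
        apply hij
        have : (i:ℤ) = (j:ℤ) := by linarith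
        exact Fin.ext (by exact_mod_cast this)
      have habs : |(i:ℤ) - (j:ℤ)| < (p:ℤ) := by
        have hi := i.isLt
        have hj := j.isLt
        rw [abs_lt]
        constructor <;> [skip; skip] <;>
          (have : (i:ℕ) < p := hi) <;> (have : (j:ℕ) < p := hj) <;> omega
      exact hne (Int.eq_zero_of_abs_lt_dvd h habs)
    · rw [Int.natCast_dvd_natCast] at h
      exact hbp h
  have hsum := dvL.v_sum_distinct Finset.univ
    (fun i : Fin p => algebraMap K L (c i) * y ^ (i:ℕ)) hdist
  have hterm_ge : ∀ i : Fin p, ((1 - (b:ℤ) : ℤ) : WithTop ℤ) ≤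
      dvL.v (algebraMap K L (c i) * y ^ (i:ℕ)) := by
    intro i
    have h9 : dvL.v ℓ ≤ dvL.v (algebraMap K L (c i) * y ^ (i:ℕ)) := by
      rw [hcsum, hsum]
      exact Finset.inf_le (Finset.mem_univ i)
    have h10 := lt_of_lt_of_le hℓ h9
    have h11 := wt_add_one_le h10
    rw [show -(b:ℤ) + 1 = 1 - (b:ℤ) by ring] at h11
    exact h11
  set c' : Fin p → K := fun i => if (i:ℕ) = 0 then 0 else c i with hc'
  have hrep : ASRep p K dvL y (1 - (b:ℤ))
      (∑ i : Fin p, algebraMap K L (c' i) * y ^ (i:ℕ)) := by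
    refine ⟨c', rfl, fun i hi => by rw [hc']; simp [hi], ?_⟩
    intro i
    by_cases hi : (i:ℕ) = 0
    · have h12 : c' i = 0 := by rw [hc']; simp [hi]
      rw [h12, map_zero, zero_mul, dvL.v_zero]
      exact le_top
    · have h12 : c' i = c i := by rw [hc']; simp [hi]
      rw [h12]
      exact hterm_ge i
  obtain ⟨T, κ, hTκ⟩ := asrep_complete hp dvK dvL hcompat hb hy hβ (1 - (b:ℤ))
    le_rfl _ hrep
  have hsplit : ℓ = algebraMap K L (c ⟨0, h0p⟩) +
      ∑ i : Fin p, algebraMap K L (c' i) * y ^ (i:ℕ) := by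
    rw [hcsum, fin_split0 h0p (fun i : Fin p => algebraMap K L (c i) * y ^ (i:ℕ))]
    congr 1
    · simp
    · refine Finset.sum_congr rfl ?_
      intro i _
      by_cases hi : (i:ℕ) = 0
      · have h12 : c' i = 0 := by rw [hc']; simp [hi]
        rw [if_pos hi, h12, map_zero, zero_mul]
      · have h12 : c' i = c i := by rw [hc']; simp [hi]
        rw [if_neg hi, h12]
  refine ⟨T, κ + c ⟨0, h0p⟩, ?_⟩
  rw [map_add, hsplit, hTκ]
  ring
end

section
/- Let K be a local field of characteristic p > 0 with perfect residue field and β₁ ∈ K with v_K(β₁) < 0 coprime to p. Then every β₂ ∈ K can be written, modulo K^℘, as β₂ ≡ μ₀^p + Σ_{i=1}^{p−1} μᵢ^p β₁^i with μᵢ ∈ K, where μ₀ lies in (a lift of) the residue field and is either 0 or not of the form w^p − w for a residue element w, and for 1 ≤ i ≤ p−1 each nonzero term satisfies v_K(μᵢ^p β₁^i) < 0. -/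
namespace DValAux

variable {K : Type*} [Field K] (dv : DVal K)

lemma exists_int {x : K} (hx : x ≠ 0) : ∃ m : ℤ, dv.v x = (m : WithTop ℤ) := by
  cases h : dv.v x with
  | top => exact absurd h (dv.v_ne_top x hx)
  | coe m => exact ⟨m, rfl⟩

lemma ne_zero_of_v {x : K} {m : ℤ} (h : dv.v x = (m : WithTop ℤ)) : x ≠ 0 := by
  intro hx; rw [hx, dv.v_zero] at h; exact (WithTop.top_ne_coe h)

lemma v_one : dv.v 1 = 0 := by
  have h := dv.v_mul 1 1
  rw [one_mul] at h
  obtain ⟨m, hm⟩ := exists_int dv (one_ne_zero (α := K))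
  rw [hm] at h
  have : m = m + m := by exact_mod_cast h
  have : m = 0 := by omega
  rw [hm, this]; rfl

lemma v_neg (x : K) : dv.v (-x) = dv.v x := by
  have hm1 : dv.v (-1 : K) = 0 := by
    have h := dv.v_mul (-1) (-1)
    rw [neg_mul_neg, one_mul, v_one] at h
    obtain ⟨m, hm⟩ := exists_int dv (neg_ne_zero.mpr (one_ne_zero (α := K)))
    rw [hm] at h ⊢
    have : m + m = 0 := by exact_mod_cast h.symm
    have : m = 0 := by omega
    rw [this]; rfl
  have := dv.v_mul (-1) x
  rw [neg_one_mul, hm1, zero_add] at this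
  exact this

lemma v_pow {x : K} {m : ℤ} (h : dv.v x = (m : WithTop ℤ)) (n : ℕ) :
    dv.v (x ^ n) = ((n * m : ℤ) : WithTop ℤ) := by
  induction n with
  | zero => simpa using v_one dv
  | succ n ih =>
      rw [pow_succ, dv.v_mul, ih, h]
      have : ((n : ℤ) * m + m : ℤ) = (((n : ℕ) + 1 : ℕ) * m : ℤ) := by push_cast; ring
      exact_mod_cast this

lemma v_inv {x : K} {m : ℤ} (h : dv.v x = (m : WithTop ℤ)) :
    dv.v x⁻¹ = ((-m : ℤ) : WithTop ℤ) := by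
  have hx := ne_zero_of_v dv h
  obtain ⟨k, hk⟩ := exists_int dv (inv_ne_zero hx)
  have := dv.v_mul x x⁻¹
  rw [mul_inv_cancel₀ hx, v_one, h, hk] at this
  have : (0 : ℤ) = m + k := by exact_mod_cast this
  have hkm : k = -m := by omega
  rw [hk, hkm]

lemma v_add_eq_left {x y : K} (h : dv.v x < dv.v y) : dv.v (x + y) = dv.v x := by
  have h1 : dv.v x ≤ dv.v (x + y) := by
    have := dv.v_add x y
    rwa [min_eq_left h.le] at this
  rcases lt_or_eq_of_le h1 with h2 | h2
  · exfalso
    have h3 := dv.v_add (x + y) (-y)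
    rw [add_neg_cancel_right] at h3
    rw [v_neg] at h3
    have : dv.v x < min (dv.v (x + y)) (dv.v y) := lt_min h2 h
    exact absurd (lt_of_lt_of_le this h3) (lt_irrefl _)
  · exact h2.symm

lemma v_high_zero {x : K} (h : ∀ n : ℕ, ((n : ℤ) : WithTop ℤ) ≤ dv.v x) : x = 0 := by
  by_contra hx
  obtain ⟨m, hm⟩ := exists_int dv hx
  have := h (m.toNat + 1)
  rw [hm] at this
  have : ((m.toNat : ℤ) + 1 : ℤ) ≤ m := by exact_mod_cast this
  omega

lemma v_pow_le {x : K} {c : ℤ} (hc : 0 ≤ c) (h : (c : WithTop ℤ) ≤ dv.v x)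
    {n : ℕ} (hn : 1 ≤ n) : (c : WithTop ℤ) ≤ dv.v (x ^ n) := by
  by_cases hx : x = 0
  · rw [hx, zero_pow (by omega), dv.v_zero]; exact le_top
  · obtain ⟨m, hm⟩ := exists_int dv hx
    rw [hm] at h
    rw [v_pow dv hm n]
    have hcm : c ≤ m := by exact_mod_cast h
    have : c ≤ n * m := by nlinarith
    exact_mod_cast this

lemma v_sub_ge {x y : K} {c : WithTop ℤ} (hx : c ≤ dv.v x) (hy : c ≤ dv.v y) :
    c ≤ dv.v (x - y) := by
  rw [sub_eq_add_neg]
  refine le_trans ?_ (dv.v_add x (-y))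
  rw [v_neg]
  exact le_min hx hy

lemma v_add_ge {x y : K} {c : WithTop ℤ} (hx : c ≤ dv.v x) (hy : c ≤ dv.v y) :
    c ≤ dv.v (x + y) := le_trans (le_min hx hy) (dv.v_add x y)

lemma v_pow_ge_self {x : K} (h : ((1 : ℤ) : WithTop ℤ) ≤ dv.v x) (n : ℕ) :
    ((n : ℤ) : WithTop ℤ) ≤ dv.v (x ^ n) := by
  by_cases hx : x = 0
  · by_cases hn : n = 0
    · subst hn; simpa using le_of_eq (v_one dv).symm
    · rw [hx, zero_pow hn, dv.v_zero]; exact le_top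
  · obtain ⟨m, hm⟩ := exists_int dv hx
    rw [hm] at h
    have hm1 : (1 : ℤ) ≤ m := by exact_mod_cast h
    rw [v_pow dv hm n]
    have : (n : ℤ) ≤ (n : ℤ) * m := by nlinarith [Int.ofNat_nonneg n]
    exact_mod_cast this

lemma AS_solve {p : ℕ} (hp : p.Prime) [CharP K p] {x : K}
    (h : (1 : WithTop ℤ) ≤ dv.v x) : ∃ k : K, k ^ p - k = x := by
  haveI := Fact.mk hp
  have h1 : ((1 : ℤ) : WithTop ℤ) ≤ dv.v x := by exact_mod_cast h
  have hpowv : ∀ j : ℕ, ((j : ℤ) : WithTop ℤ) ≤ dv.v (x ^ (p ^ j)) := by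
    intro j
    have hle : ((j : ℤ) : WithTop ℤ) ≤ (((p ^ j : ℕ) : ℤ) : WithTop ℤ) := by
      exact_mod_cast (Nat.lt_pow_self hp.one_lt : j < p ^ j).le
    exact le_trans hle (v_pow_ge_self dv h1 (p ^ j))
  have hstep : ∀ n : ℕ, ((n : ℤ) : WithTop ℤ) ≤
      dv.v ((fun n => -(∑ j ∈ Finset.range n, x ^ (p ^ j))) (n + 1)
        - (fun n => -(∑ j ∈ Finset.range n, x ^ (p ^ j))) n) := by
    intro n
    have heq : (-(∑ j ∈ Finset.range (n + 1), x ^ (p ^ j)))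
        - (-(∑ j ∈ Finset.range n, x ^ (p ^ j))) = -(x ^ (p ^ n)) := by
      rw [Finset.sum_range_succ]; ring
    simp only [heq]
    rw [v_neg]
    exact hpowv n
  obtain ⟨k, hk⟩ := dv.complete (fun n => -(∑ j ∈ Finset.range n, x ^ (p ^ j))) hstep
  refine ⟨k, ?_⟩
  have key : ∀ n : ℕ, ((n : ℤ) : WithTop ℤ) ≤ dv.v ((k ^ p - k) - x) := by
    intro n
    have hA : (∑ j ∈ Finset.range n, x ^ (p ^ j)) ^ p
        = ∑ j ∈ Finset.range n, x ^ (p ^ (j + 1)) := by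
      rw [sum_pow_char]
      apply Finset.sum_congr rfl
      intro j _
      rw [← pow_mul, ← pow_succ]
    have h2 : (∑ j ∈ Finset.range n, x ^ (p ^ (j + 1)))
        - (∑ j ∈ Finset.range n, x ^ (p ^ j)) = x ^ (p ^ n) - x := by
      rw [← Finset.sum_sub_distrib]
      have := Finset.sum_range_sub (fun j => x ^ (p ^ j)) n
      simp only [pow_zero, pow_one] at this
      exact this
    have hfn : (-(∑ j ∈ Finset.range n, x ^ (p ^ j))) ^ p
        - (-(∑ j ∈ Finset.range n, x ^ (p ^ j))) = x - x ^ (p ^ n) := by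
      have hneg : (-(∑ j ∈ Finset.range n, x ^ (p ^ j))) ^ p
          = -((∑ j ∈ Finset.range n, x ^ (p ^ j)) ^ p) := by
        rw [show (-(∑ j ∈ Finset.range n, x ^ (p ^ j)))
            = 0 - (∑ j ∈ Finset.range n, x ^ (p ^ j)) by ring,
          sub_pow_char, zero_pow hp.ne_zero, zero_sub]
      rw [hneg, hA]
      linear_combination -h2
    have hdecomp : (k ^ p - k) - x
        = ((k - (-(∑ j ∈ Finset.range n, x ^ (p ^ j)))) ^ p
            - (k - (-(∑ j ∈ Finset.range n, x ^ (p ^ j)))))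
          - x ^ (p ^ n) := by
      rw [sub_pow_char]
      linear_combination hfn
    rw [hdecomp]
    have hkn := hk n
    have hn0 : (0 : ℤ) ≤ (n : ℤ) := by positivity
    refine v_sub_ge dv (v_sub_ge dv ?_ hkn) (hpowv n)
    exact v_pow_le dv hn0 hkn hp.one_le
  exact sub_eq_zero.mp (v_high_zero dv key)

lemma approx {p : ℕ} (hp : p.Prime)
    (hperf : ∀ x : K, 0 ≤ dv.v x →
      ∃ y : K, 0 ≤ dv.v y ∧ (1 : WithTop ℤ) ≤ dv.v (x - y ^ p))
    (x : K) (m : ℤ) (hx : (((p : ℤ) * m : ℤ) : WithTop ℤ) ≤ dv.v x) :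
    ∃ y : K, ((m : ℤ) : WithTop ℤ) ≤ dv.v y ∧
      ((((p : ℤ) * m + 1 : ℤ)) : WithTop ℤ) ≤ dv.v (x - y ^ p) := by
  obtain ⟨ρ, hρ⟩ := dv.v_surj (-m)
  have hρ0 : ρ ≠ 0 := ne_zero_of_v dv hρ
  have hvρp : dv.v (ρ ^ p) = ((p * (-m) : ℤ) : WithTop ℤ) := v_pow dv hρ p
  have hv1 : 0 ≤ dv.v (x * ρ ^ p) := by
    by_cases hx0 : x = 0
    · rw [hx0, zero_mul, dv.v_zero]; exact le_top
    · obtain ⟨a, ha⟩ := exists_int dv hx0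
      rw [dv.v_mul, ha, hvρp, ← WithTop.coe_add]
      rw [ha] at hx
      have : (p : ℤ) * m ≤ a := by exact_mod_cast hx
      have h0 : (0 : ℤ) ≤ a + p * (-m) := by linarith
      exact_mod_cast h0
  obtain ⟨y₀, hy₀0, hy₀1⟩ := hperf (x * ρ ^ p) hv1
  refine ⟨y₀ * ρ⁻¹, ?_, ?_⟩
  · have hvρi : dv.v ρ⁻¹ = ((m : ℤ) : WithTop ℤ) := by
      have := v_inv dv hρ
      rwa [neg_neg] at this
    rw [dv.v_mul, hvρi]
    calc ((m : ℤ) : WithTop ℤ) = 0 + ((m : ℤ) : WithTop ℤ) := by rw [zero_add]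
      _ ≤ dv.v y₀ + ((m : ℤ) : WithTop ℤ) := by
          exact add_le_add_left hy₀0 _
  · have hρpne : (ρ : K) ^ p ≠ 0 := pow_ne_zero p hρ0
    have hkey : x - (y₀ * ρ⁻¹) ^ p = (x * ρ ^ p - y₀ ^ p) * (ρ ^ p)⁻¹ := by
      field_simp
      rw [div_pow, sub_mul, div_mul_cancel₀ _ hρpne]
    rw [hkey, dv.v_mul]
    have hvρpi : dv.v ((ρ ^ p) ⁻¹) = ((p * m : ℤ) : WithTop ℤ) := by
      have := v_inv dv hvρp
      have h2 : (-((p : ℤ) * -m) : ℤ) = (p : ℤ) * m := by ring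
      rwa [h2] at this
    rw [hvρpi]
    calc (((p : ℤ) * m + 1 : ℤ) : WithTop ℤ)
        = ((1 : ℤ) : WithTop ℤ) + ((p * m : ℤ) : WithTop ℤ) := by
          rw [← WithTop.coe_add]; congr 1; ring
      _ ≤ dv.v (x * ρ ^ p - y₀ ^ p) + ((p * m : ℤ) : WithTop ℤ) := by
          refine add_le_add_left ?_ _
          exact_mod_cast hy₀1

lemma exists_i {p : ℕ} (hp : p.Prime) {b : ℕ} (hbp : ¬ p ∣ b) {m : ℤ}
    (hm : ¬ (p : ℤ) ∣ m) :
    ∃ i : ℕ, 1 ≤ i ∧ i < p ∧ (p : ℤ) ∣ (m + i * b) := by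
  haveI := Fact.mk hp
  have hb0 : (b : ZMod p) ≠ 0 := by
    rw [Ne, ZMod.natCast_eq_zero_iff]; exact hbp
  set c : ZMod p := (-((m : ℤ) : ZMod p)) * (b : ZMod p)⁻¹ with hc
  have hcb : c * (b : ZMod p) = -((m : ℤ) : ZMod p) := by
    rw [hc, mul_assoc, inv_mul_cancel₀ hb0, mul_one]
  have hc0 : c ≠ 0 := by
    intro h0
    rw [h0, zero_mul] at hcb
    have h1 : ((m : ℤ) : ZMod p) = 0 := by linear_combination hcb
    exact hm ((ZMod.intCast_zmod_eq_zero_iff_dvd m p).mp h1)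
  refine ⟨c.val, ?_, ZMod.val_lt c, ?_⟩
  · exact Nat.one_le_iff_ne_zero.mpr (fun h => hc0 ((ZMod.val_eq_zero c).mp h))
  · rw [← ZMod.intCast_zmod_eq_zero_iff_dvd]
    push_cast
    rw [ZMod.natCast_val, ZMod.cast_id]
    linear_combination hcb

lemma key {p : ℕ} (hp : p.Prime) [CharP K p]
    (hperf : ∀ x : K, 0 ≤ dv.v x →
      ∃ y : K, 0 ≤ dv.v y ∧ (1 : WithTop ℤ) ≤ dv.v (x - y ^ p))
    {β₁ : K} {b : ℕ} (hbp : ¬ p ∣ b)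
    (hβ₁ : dv.v β₁ = ((-(b : ℤ) : ℤ) : WithTop ℤ)) :
    ∀ N : ℕ, ∀ x : K, ((-(N : ℤ) : ℤ) : WithTop ℤ) ≤ dv.v x →
    ∃ (μ : ℕ → K) (y k : K),
      x = (∑ i ∈ Finset.Ico 1 p, μ i ^ p * β₁ ^ i) + y + (k ^ p - k) ∧
      0 ≤ dv.v y ∧
      ∀ i ∈ Finset.Ico 1 p, μ i = 0 ∨
        (dv.v x ≤ dv.v (μ i ^ p * β₁ ^ i) ∧ dv.v (μ i ^ p * β₁ ^ i) < 0) := by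
  classical
  haveI := Fact.mk hp
  have base : ∀ x : K, 0 ≤ dv.v x →
      ∃ (μ : ℕ → K) (y k : K),
      x = (∑ i ∈ Finset.Ico 1 p, μ i ^ p * β₁ ^ i) + y + (k ^ p - k) ∧
      0 ≤ dv.v y ∧
      ∀ i ∈ Finset.Ico 1 p, μ i = 0 ∨
        (dv.v x ≤ dv.v (μ i ^ p * β₁ ^ i) ∧ dv.v (μ i ^ p * β₁ ^ i) < 0) := by
    intro x hx
    refine ⟨fun _ => 0, x, 0, ?_, hx, fun i _ => Or.inl rfl⟩
    simp [zero_pow hp.ne_zero]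
  intro N
  induction N with
  | zero =>
      intro x hx
      refine base x ?_
      simpa using hx
  | succ N ih =>
      intro x hx
      by_cases h0 : 0 ≤ dv.v x
      · exact base x h0
      · push_neg at h0
        have hx0 : x ≠ 0 := by
          intro h
          rw [h, dv.v_zero] at h0
          exact absurd h0 (by simp)
        obtain ⟨m, hm⟩ := exists_int dv hx0
        have hmneg : m < 0 := by
          rw [hm] at h0; exact_mod_cast h0
        have hmN : -((N : ℤ) + 1) ≤ m := by
          rw [hm] at hx
          have : ((-((N : ℕ) + 1 : ℕ) : ℤ) : WithTop ℤ) ≤ (m : WithTop ℤ) := by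
            exact_mod_cast hx
          have h2 : (-((N : ℕ) + 1 : ℕ) : ℤ) ≤ m := by exact_mod_cast this
          push_cast at h2
          linarith
        have hβ₁0 : β₁ ≠ 0 := ne_zero_of_v dv hβ₁
        by_cases hdvd : (p : ℤ) ∣ m
        · -- p divides m : kill with a p-th power plus Artin-Schreier adjustment
          obtain ⟨t, ht⟩ := hdvd
          have hp2 : (2 : ℤ) ≤ (p : ℤ) := by exact_mod_cast hp.two_le
          have htneg : t < 0 := by nlinarith
          have htm : m + 1 ≤ t := by
            have h3 : (0 : ℤ) ≤ ((p : ℤ) - 2) * (-t) :=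
              mul_nonneg (by linarith) (by linarith)
            linarith
          obtain ⟨y₀, hy₀v, hy₀1⟩ := approx dv hp hperf x t (by rw [hm, ← ht])
          have hx'm : ((m + 1 : ℤ) : WithTop ℤ) ≤ dv.v (x - (y₀ ^ p - y₀)) := by
            have h1 : x - (y₀ ^ p - y₀) = (x - y₀ ^ p) + y₀ := by ring
            rw [h1]
            apply v_add_ge
            · refine le_trans ?_ hy₀1
              have : m + 1 ≤ (p : ℤ) * t + 1 := by rw [← ht]
              exact_mod_cast this
            · refine le_trans ?_ hy₀v
              exact_mod_cast htm
          have hx' : ((-(N : ℤ) : ℤ) : WithTop ℤ) ≤ dv.v (x - (y₀ ^ p - y₀)) := by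
            refine le_trans ?_ hx'm
            exact_mod_cast (by linarith : -(N : ℤ) ≤ m + 1)
          obtain ⟨μ, y, k, heq, hyv, hcond⟩ := ih (x - (y₀ ^ p - y₀)) hx'
          refine ⟨μ, y, k + y₀, ?_, hyv, ?_⟩
          · rw [add_pow_char]
            linear_combination heq
          · intro i hi
            rcases hcond i hi with h | ⟨h1, h2⟩
            · exact Or.inl h
            · refine Or.inr ⟨le_trans ?_ h1, h2⟩
              rw [hm]
              refine le_trans ?_ hx'm
              exact_mod_cast (by linarith : m ≤ m + 1)
        · -- p does not divide m : extract a term μ₀^p β₁^i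
          obtain ⟨i, hi1, hip, hidvd⟩ := exists_i hp hbp hdvd
          have hiIco : i ∈ Finset.Ico 1 p := Finset.mem_Ico.mpr ⟨hi1, hip⟩
          obtain ⟨t, ht⟩ := hidvd
          have hvβi : dv.v (β₁ ^ i) = (((i : ℤ) * -(b : ℤ) : ℤ) : WithTop ℤ) :=
            v_pow dv hβ₁ i
          have hvβii : dv.v ((β₁ ^ i)⁻¹) = (((i : ℤ) * (b : ℤ) : ℤ) : WithTop ℤ) := by
            have := v_inv dv hvβi
            rwa [show (-((i : ℤ) * -(b : ℤ)) : ℤ) = (i : ℤ) * (b : ℤ) by ring] at this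
          have hz : dv.v (x * (β₁ ^ i)⁻¹) = (((p : ℤ) * t : ℤ) : WithTop ℤ) := by
            rw [dv.v_mul, hm, hvβii, ← WithTop.coe_add, ht]
          obtain ⟨μ₀, hμ₀v, hμ₀1⟩ := approx dv hp hperf (x * (β₁ ^ i)⁻¹) t (le_of_eq hz.symm)
          have hvμ₀p : dv.v (μ₀ ^ p) = (((p : ℤ) * t : ℤ) : WithTop ℤ) := by
            have h1 : μ₀ ^ p = (x * (β₁ ^ i)⁻¹) + (-(x * (β₁ ^ i)⁻¹ - μ₀ ^ p)) := by ring
            have hlt : dv.v (x * (β₁ ^ i)⁻¹) < dv.v (-(x * (β₁ ^ i)⁻¹ - μ₀ ^ p)) := by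
              rw [v_neg, hz]
              refine lt_of_lt_of_le ?_ hμ₀1
              exact_mod_cast (by linarith : (p : ℤ) * t < (p : ℤ) * t + 1)
            rw [h1, v_add_eq_left dv hlt, hz]
          have hμ₀0 : μ₀ ≠ 0 := by
            intro h
            rw [h, zero_pow hp.ne_zero, dv.v_zero] at hvμ₀p
            exact WithTop.top_ne_coe hvμ₀p
          have hvμ₀ : dv.v μ₀ = (t : WithTop ℤ) := by
            obtain ⟨u, hu⟩ := exists_int dv hμ₀0
            have := v_pow dv hu p
            rw [hvμ₀p] at this
            have h2 : (p : ℤ) * t = (p : ℤ) * u := by exact_mod_cast this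
            have hp0 : (0 : ℤ) < (p : ℤ) := by exact_mod_cast hp.pos
            have : u = t := by
              have := mul_left_cancel₀ (ne_of_gt hp0) h2
              linarith
            rw [hu, this]
          have hterm : dv.v (μ₀ ^ p * β₁ ^ i) = (m : WithTop ℤ) := by
            rw [dv.v_mul, hvμ₀p, hvβi, ← WithTop.coe_add]
            congr 1
            linarith [ht]
          have hx'eq : x - μ₀ ^ p * β₁ ^ i = (x * (β₁ ^ i)⁻¹ - μ₀ ^ p) * β₁ ^ i := by
            field_simp
          have hx'v : ((m + 1 : ℤ) : WithTop ℤ) ≤ dv.v (x - μ₀ ^ p * β₁ ^ i) := by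
            rw [hx'eq, dv.v_mul, hvβi]
            calc ((m + 1 : ℤ) : WithTop ℤ)
                = (((p : ℤ) * t + 1 : ℤ) : WithTop ℤ) + (((i : ℤ) * -(b : ℤ) : ℤ) : WithTop ℤ) := by
                  rw [← WithTop.coe_add]; congr 1; linarith [ht]
              _ ≤ _ := add_le_add_left hμ₀1 _
          have hx'N : ((-(N : ℤ) : ℤ) : WithTop ℤ) ≤ dv.v (x - μ₀ ^ p * β₁ ^ i) := by
            refine le_trans ?_ hx'v
            exact_mod_cast (by linarith : -(N : ℤ) ≤ m + 1)
          obtain ⟨μ, y, k, heq, hyv, hcond⟩ := ih _ hx'N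
          have hvx_le : ∀ z : K, dv.v (x - μ₀ ^ p * β₁ ^ i) ≤ dv.v z → dv.v x ≤ dv.v z := by
            intro z hzv
            refine le_trans ?_ (le_trans hx'v hzv)
            rw [hm]
            exact_mod_cast (by linarith : m ≤ m + 1)
          refine ⟨Function.update μ i (μ i + μ₀), y, k, ?_, hyv, ?_⟩
          · have hupd : ∀ j ∈ Finset.Ico 1 p,
                (Function.update μ i (μ i + μ₀) j) ^ p * β₁ ^ j
                  = Function.update (fun j => μ j ^ p * β₁ ^ j) i
                      ((μ i + μ₀) ^ p * β₁ ^ i) j := by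
              intro j _
              by_cases hji : j = i
              · subst hji; rw [Function.update_self, Function.update_self]
              · rw [Function.update_of_ne hji, Function.update_of_ne hji]
            rw [Finset.sum_congr rfl hupd, Finset.sum_update_of_mem hiIco, add_pow_char]
            have hS := Finset.sum_eq_sum_sdiff_singleton_add hiIco
              (fun j => μ j ^ p * β₁ ^ j)
            linear_combination heq + hS
          · intro j hj
            by_cases hji : j = i
            · subst hji
              rw [Function.update_self]
              right
              have hterm' : dv.v ((μ j + μ₀) ^ p * β₁ ^ j) = (m : WithTop ℤ) := by
                rcases hcond j hiIco with h | ⟨h1, h2⟩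
                · rw [h, zero_add]; exact hterm
                · have hμj0 : μ j ≠ 0 := by
                    intro h0
                    rw [h0, zero_pow hp.ne_zero, zero_mul, dv.v_zero] at h2
                    exact absurd h2 (by simp)
                  obtain ⟨s, hs⟩ := exists_int dv hμj0
                  have hterms : dv.v (μ j ^ p * β₁ ^ j)
                      = (((p : ℤ) * s + (j : ℤ) * -(b : ℤ) : ℤ) : WithTop ℤ) := by
                    rw [dv.v_mul, v_pow dv hs, hvβi, ← WithTop.coe_add]
                  have hchain : ((m + 1 : ℤ) : WithTop ℤ)
                      ≤ (((p : ℤ) * s + (j : ℤ) * -(b : ℤ) : ℤ) : WithTop ℤ) := by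
                    rw [← hterms]
                    exact le_trans hx'v h1
                  have hineq : m + 1 ≤ (p : ℤ) * s + (j : ℤ) * -(b : ℤ) := by
                    exact_mod_cast hchain
                  have hts : t < s := by
                    have hp0 : (0 : ℤ) < (p : ℤ) := by exact_mod_cast hp.pos
                    nlinarith [ht]
                  have hsum : dv.v (μ j + μ₀) = (t : WithTop ℤ) := by
                    rw [add_comm, v_add_eq_left dv, hvμ₀]
                    rw [hvμ₀, hs]
                    exact_mod_cast hts
                  rw [dv.v_mul, v_pow dv hsum, hvβi, ← WithTop.coe_add]
                  congr 1
                  linarith [ht]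
              rw [hterm', hm]
              exact ⟨le_refl _, by exact_mod_cast hmneg⟩
            · rw [Function.update_of_ne hji]
              rcases hcond j hj with h | ⟨h1, h2⟩
              · exact Or.inl h
              · exact Or.inr ⟨hvx_le _ h1, h2⟩

end DValAux

open DValAux in
/-- Decomposition lemma: if `v_K(β₁) = −b < 0` with `p ∤ b`, then every
`β₂ ∈ K` can be written, modulo `K^℘`, as
`β₂ ≡ μ₀^p + Σ_{i=1}^{p−1} μᵢ^p β₁^i`, where `μ₀` is integral and either `0`
or has residue not of the form `w^p − w`, and each nonzero term
`μᵢ^p β₁^i` (`1 ≤ i ≤ p−1`) has negative valuation. -/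
theorem stmt18 (p : ℕ) (hp : p.Prime) {K : Type*} [Field K] [CharP K p]
    (dv : DVal K)
    (hperf : ∀ x : K, 0 ≤ dv.v x →
      ∃ y : K, 0 ≤ dv.v y ∧ (1 : WithTop ℤ) ≤ dv.v (x - y ^ p))
    (β₁ : K) (b : ℕ) (hb : 0 < b) (hbp : ¬ p ∣ b)
    (hβ₁ : dv.v β₁ = ((-(b : ℤ) : ℤ) : WithTop ℤ))
    (β₂ : K) :
    ∃ (μ : ℕ → K) (k : K),
      β₂ = (μ 0) ^ p + (∑ i ∈ Finset.Ico 1 p, (μ i) ^ p * β₁ ^ i) +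
          (k ^ p - k) ∧
      0 ≤ dv.v (μ 0) ∧
      (μ 0 = 0 ∨ ¬∃ w : K, 0 ≤ dv.v w ∧
        (1 : WithTop ℤ) ≤ dv.v (μ 0 - (w ^ p - w))) ∧
      (∀ i ∈ Finset.Ico 1 p, μ i = 0 ∨
        dv.v ((μ i) ^ p * β₁ ^ i) < 0) := by
  classical
  haveI := Fact.mk hp
  have hN : ∃ N : ℕ, ((-(N : ℤ) : ℤ) : WithTop ℤ) ≤ dv.v β₂ := by
    by_cases h : β₂ = 0
    · exact ⟨0, by rw [h, dv.v_zero]; exact le_top⟩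
    · obtain ⟨m, hm⟩ := exists_int dv h
      refine ⟨m.natAbs, ?_⟩
      rw [hm]
      exact_mod_cast (by omega : -((m.natAbs : ℕ) : ℤ) ≤ m)
  obtain ⟨N, hN⟩ := hN
  obtain ⟨μ, y, k, heq, hyv, hcond⟩ := key dv hp hperf hbp hβ₁ N β₂ hN
  have hne0 : ∀ j ∈ Finset.Ico 1 p, j ≠ 0 := by
    intro j hj
    have := (Finset.mem_Ico.mp hj).1
    omega
  by_cases hc : ∃ w : K, 0 ≤ dv.v w ∧ (1 : WithTop ℤ) ≤ dv.v (y - (w ^ p - w))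
  · obtain ⟨w, hw0, hw1⟩ := hc
    obtain ⟨k', hk'⟩ := AS_solve dv hp hw1
    have hsum : ∑ j ∈ Finset.Ico 1 p, (Function.update μ 0 (0 : K) j) ^ p * β₁ ^ j
        = ∑ j ∈ Finset.Ico 1 p, μ j ^ p * β₁ ^ j :=
      Finset.sum_congr rfl (fun j hj => by rw [Function.update_of_ne (hne0 j hj)])
    refine ⟨Function.update μ 0 0, k + (w + k'), ?_, ?_, Or.inl ?_, ?_⟩
    · rw [hsum, Function.update_self, zero_pow hp.ne_zero, add_pow_char, add_pow_char]
      linear_combination heq - hk'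
    · rw [Function.update_self, dv.v_zero]; exact le_top
    · exact Function.update_self 0 0 μ
    · intro j hj
      rw [Function.update_of_ne (hne0 j hj)]
      rcases hcond j hj with h | ⟨_, h2⟩
      · exact Or.inl h
      · exact Or.inr h2
  · obtain ⟨μ₀, hμ₀0, hμ₀1⟩ := hperf y hyv
    obtain ⟨k', hk'⟩ := AS_solve dv hp hμ₀1
    have hsum : ∑ j ∈ Finset.Ico 1 p, (Function.update μ 0 μ₀ j) ^ p * β₁ ^ j
        = ∑ j ∈ Finset.Ico 1 p, μ j ^ p * β₁ ^ j :=
      Finset.sum_congr rfl (fun j hj => by rw [Function.update_of_ne (hne0 j hj)])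
    refine ⟨Function.update μ 0 μ₀, k + k', ?_, ?_, Or.inr ?_, ?_⟩
    · rw [hsum, Function.update_self, add_pow_char]
      linear_combination heq - hk'
    · rw [Function.update_self]; exact hμ₀0
    · simp only [Function.update_self]
      rintro ⟨w, hw0, hw1⟩
      apply hc
      refine ⟨w ^ p, ?_, ?_⟩
      · have h0 : ((0 : ℤ) : WithTop ℤ) ≤ dv.v w := by exact_mod_cast hw0
        have := v_pow_le dv le_rfl h0 hp.one_le
        exact_mod_cast this
      · have hdecomp : y - ((w ^ p) ^ p - w ^ p)
            = (y - μ₀ ^ p) + (μ₀ - (w ^ p - w)) ^ p := by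
          rw [sub_pow_char, sub_pow_char]
          ring
        rw [hdecomp]
        have h1 : ((1 : ℤ) : WithTop ℤ) ≤ dv.v (μ₀ - (w ^ p - w)) := by
          exact_mod_cast hw1
        have h2 := v_pow_le dv (by norm_num : (0:ℤ) ≤ 1) h1 hp.one_le
        have h3 : ((1 : ℤ) : WithTop ℤ) ≤ dv.v (y - μ₀ ^ p) := by exact_mod_cast hμ₀1
        have := v_add_ge dv h3 h2
        exact_mod_cast this
    · intro j hj
      rw [Function.update_of_ne (hne0 j hj)]
      rcases hcond j hj with h | ⟨_, h2⟩
      · exact Or.inl h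
      · exact Or.inr h2
end
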